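/- arXiv:1704.04437 — 4 statements merged into one kernel-verified Lean document; each statement's English description precedes it below -/
import Mathlib

section
/- Let m ≥ 2, let {1,…,m} be the disjoint union of n ≥ 2 non-empty subsets C_1,…,C_n, let Y be a Banach space of cotype q, and let r_1,…,r_n ∈ [1,∞), p_1,…,p_n ∈ [1,∞). Assume there exists k ∈ {1,…,n} with r_k ≥ q. Set 1/s = 1/r_k − Σ_{j≠k} |C_j|/p_j* and assume s > 0. Then every m-linear map T : X_1×⋯×X_m → Y that is multiple (r_k,p_k)-summing in the coordinates of C_k for each k = 1,…,n is multiple (s,𝐪)-summing, where 𝐪=(q_1,…,q_m) with q_j = p_k whenever j ∈ C_k. -/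
/-- The sequence `x` in `X` has weak `ℓ^p` norm at most `1`. -/
def WeakNormLEOne {X : Type*} [NormedAddCommGroup X] [NormedSpace ℝ X]
    (p : ℝ) (x : ℕ → X) : Prop :=
  ∀ φ : X →L[ℝ] ℝ, ‖φ‖ ≤ 1 → ∀ F : Finset ℕ, ∑ i ∈ F, |φ (x i)| ^ p ≤ 1

/-- An `m`-linear map `T` is multiple `(r, 𝐩)`-summing (stated, by homogeneity, for
sequences of weak `ℓ^{p_j}` norm at most one). -/
def MultipleSumming {m : ℕ} {X : Fin m → Type*} [∀ j, NormedAddCommGroup (X j)]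
    [∀ j, NormedSpace ℝ (X j)] {Y : Type*} [NormedAddCommGroup Y] [NormedSpace ℝ Y]
    (T : ContinuousMultilinearMap ℝ X Y) (r : ℝ) (p : Fin m → ℝ) : Prop :=
  ∃ C > 0, ∀ x : ∀ j, ℕ → X j, (∀ j, WeakNormLEOne (p j) (x j)) →
    ∀ F : Finset (Fin m → ℕ), ∑ i ∈ F, ‖T (fun j => x j (i j))‖ ^ r ≤ C ^ r

/-- `T` is multiple `(r, p)`-summing in the coordinates of `C`: the `|C|`-linear maps
`T^C(z) : x ↦ T(x, z)` are multiple `(r, p)`-summing, uniformly over `z` in the unit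
ball of `X^{C̄}`. -/
def CoordSumming {m : ℕ} {X : Fin m → Type*} [∀ j, NormedAddCommGroup (X j)]
    [∀ j, NormedSpace ℝ (X j)] {Y : Type*} [NormedAddCommGroup Y] [NormedSpace ℝ Y]
    (T : ContinuousMultilinearMap ℝ X Y) (C : Finset (Fin m)) (r p : ℝ) : Prop :=
  ∃ κ > 0, ∀ z : ∀ j, X j, (∀ j ∉ C, ‖z j‖ ≤ 1) →
    ∀ x : ∀ j, ℕ → X j, (∀ j ∈ C, WeakNormLEOne p (x j)) →
      ∀ F : Finset ({j : Fin m // j ∈ C} → ℕ),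
        ∑ i ∈ F, ‖T (fun j => if h : j ∈ C then x j (i ⟨j, h⟩) else z j)‖ ^ r ≤ κ ^ r

/-- `Y` has cotype `q`. -/
def HasCotype (Y : Type*) [NormedAddCommGroup Y] [NormedSpace ℝ Y] (q : ℝ) : Prop :=
  ∃ C > 0, ∀ n : ℕ, ∀ y : Fin n → Y,
    (∑ k, ‖y k‖ ^ q) ^ (1 / q) ≤
      C * ((∑ ε : Fin n → Bool, ‖∑ k, (if ε k then (1 : ℝ) else -1) • y k‖ ^ 2) / 2 ^ n)
        ^ ((1 : ℝ) / 2)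

section Aux
open Finset

lemma my_sum_rpow_le_rpow_sum {ι : Type*} (F : Finset ι) (b : ι → ℝ) (hb : ∀ i, 0 ≤ b i)
    {e : ℝ} (he : 1 ≤ e) : ∑ i ∈ F, b i ^ e ≤ (∑ i ∈ F, b i) ^ e := by
  have hS : 0 ≤ ∑ i ∈ F, b i := Finset.sum_nonneg fun i _ => hb i
  have he0 : e ≠ 0 := by linarith
  calc ∑ i ∈ F, b i ^ e ≤ ∑ i ∈ F, b i * (∑ j ∈ F, b j) ^ (e - 1) := by
        refine Finset.sum_le_sum fun i hi => ?_
        have h2 := Real.rpow_add' (y := 1) (z := e - 1) (hb i) (by simpa using he0)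
        rw [show (1 : ℝ) + (e - 1) = e by ring] at h2
        rw [h2, Real.rpow_one]
        exact mul_le_mul_of_nonneg_left
          (Real.rpow_le_rpow (hb i) (Finset.single_le_sum (fun j _ => hb j) hi) (by linarith))
          (hb i)
    _ = (∑ i ∈ F, b i) * (∑ j ∈ F, b j) ^ (e - 1) := by rw [← Finset.sum_mul]
    _ = (∑ i ∈ F, b i) ^ e := by
        have h2 := Real.rpow_add' (y := 1) (z := e - 1) hS (by simpa using he0)
        rw [show (1 : ℝ) + (e - 1) = e by ring] at h2
        rw [h2, Real.rpow_one]

lemma my_lp_mono {ι : Type*} (F : Finset ι) (a : ι → ℝ) (ha : ∀ i, 0 ≤ a i)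
    {r t : ℝ} (hr : 0 < r) (hrt : r ≤ t) :
    ∑ i ∈ F, a i ^ t ≤ (∑ i ∈ F, a i ^ r) ^ (t / r) := by
  have h1 : ∀ i, a i ^ t = (a i ^ r) ^ (t / r) := by
    intro i
    rw [← Real.rpow_mul (ha i), mul_div_cancel₀ _ hr.ne']
  simp_rw [h1]
  exact my_sum_rpow_le_rpow_sum F _ (fun i => Real.rpow_nonneg (ha i) r)
    ((one_le_div hr).mpr hrt)

lemma my_jensen {ι : Type*} [Fintype ι] [Nonempty ι] (Xv : ι → ℝ) (hX : ∀ i, 0 ≤ Xv i)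
    {e : ℝ} (he : 1 ≤ e) :
    ((∑ i, Xv i) / (Fintype.card ι : ℝ)) ^ e ≤ (∑ i, Xv i ^ e) / (Fintype.card ι : ℝ) := by
  have hc : (0 : ℝ) < (Fintype.card ι : ℝ) := by exact_mod_cast Fintype.card_pos
  have key := Real.rpow_arith_mean_le_arith_mean_rpow Finset.univ
    (fun _ : ι => (Fintype.card ι : ℝ)⁻¹) Xv
    (fun i _ => by positivity)
    (by rw [Finset.sum_const, Finset.card_univ, nsmul_eq_mul, mul_inv_cancel₀ hc.ne'])
    (fun i _ => hX i) he
  calc ((∑ i, Xv i) / (Fintype.card ι : ℝ)) ^ e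
      = (∑ i, (Fintype.card ι : ℝ)⁻¹ * Xv i) ^ e := by
        rw [← Finset.mul_sum, div_eq_inv_mul]
    _ ≤ ∑ i, (Fintype.card ι : ℝ)⁻¹ * Xv i ^ e := key
    _ = (∑ i, Xv i ^ e) / (Fintype.card ι : ℝ) := by
        rw [← Finset.mul_sum, div_eq_inv_mul]

lemma my_norm_le_one {E : Type*} [NormedAddCommGroup E] [NormedSpace ℝ E] (u : E)
    (h : ∀ φ : E →L[ℝ] ℝ, ‖φ‖ ≤ 1 → |φ u| ≤ 1) : ‖u‖ ≤ 1 := by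
  refine NormedSpace.norm_le_dual_bound ℝ u zero_le_one fun f => ?_
  rcases eq_or_ne f 0 with rfl | hf
  · simp
  · have hfpos : 0 < ‖f‖ := norm_pos_iff.mpr hf
    have h1 : ‖(‖f‖⁻¹ • f)‖ ≤ 1 := by
      rw [norm_smul, norm_inv, norm_norm, inv_mul_cancel₀ hfpos.ne']
    have h2 := h (‖f‖⁻¹ • f) h1
    rw [ContinuousLinearMap.smul_apply, smul_eq_mul, abs_mul, abs_inv, abs_norm] at h2
    rw [Real.norm_eq_abs, one_mul]
    calc |f u| = ‖f‖ * (‖f‖⁻¹ * |f u|) := by field_simp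
    _ ≤ ‖f‖ * 1 := mul_le_mul_of_nonneg_left h2 hfpos.le
    _ = ‖f‖ := mul_one _

/-- Coordinatewise multiple summability with per-coordinate weak exponents. -/
def CS {m : ℕ} {X : Fin m → Type*} [∀ j, NormedAddCommGroup (X j)]
    [∀ j, NormedSpace ℝ (X j)] {Y : Type*} [NormedAddCommGroup Y] [NormedSpace ℝ Y]
    (T : ContinuousMultilinearMap ℝ X Y) (D : Finset (Fin m)) (r : ℝ) (pp : Fin m → ℝ) :
    Prop :=
  ∃ κ > 0, ∀ z : ∀ j, X j, (∀ j ∉ D, ‖z j‖ ≤ 1) →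
    ∀ x : ∀ j, ℕ → X j, (∀ j ∈ D, WeakNormLEOne (pp j) (x j)) →
      ∀ F : Finset ({j : Fin m // j ∈ D} → ℕ),
        ∑ i ∈ F, ‖T (fun j => if h : j ∈ D then x j (i ⟨j, h⟩) else z j)‖ ^ r ≤ κ ^ r

set_option maxHeartbeats 1000000 in
lemma CS_step {m : ℕ} {X : Fin m → Type*} [∀ j, NormedAddCommGroup (X j)]
    [∀ j, NormedSpace ℝ (X j)] {Y : Type*} [NormedAddCommGroup Y] [NormedSpace ℝ Y]
    {T : ContinuousMultilinearMap ℝ X Y} {q : ℝ} (hq2 : 2 ≤ q) (hY : HasCotype Y q)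
    {D : Finset (Fin m)} {j₀ : Fin m} (hj₀ : j₀ ∉ D)
    {r t : ℝ} {pp : Fin m → ℝ} (hqr : q ≤ r) (hp1 : 1 ≤ pp j₀)
    (ht : 1 / t = 1 / r - (1 - 1 / pp j₀)) (htpos : 0 < t)
    (h : CS T D r pp) : CS T (insert j₀ D) t pp := by
  classical
  obtain ⟨κ, hκ, hIH⟩ := h
  obtain ⟨Cq, hCq, hcot⟩ := hY
  have hq0 : (0:ℝ) < q := by linarith
  have hr0 : (0:ℝ) < r := by linarith
  have hp0 : (0:ℝ) < pp j₀ := by linarith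
  have hppinv : 1 / pp j₀ ≤ 1 := by rw [div_le_one hp0]; linarith
  have h1tr : 1 / t ≤ 1 / r := by linarith
  have hrt : r ≤ t := by
    have h2 := (div_le_div_iff₀ htpos hr0).mp h1tr
    linarith
  refine ⟨Cq * κ, by positivity, ?_⟩
  intro z hz x hx F
  have hj₀D' : j₀ ∈ insert j₀ D := Finset.mem_insert_self _ _
  set resD : ({j : Fin m // j ∈ insert j₀ D} → ℕ) → ({j : Fin m // j ∈ D} → ℕ) :=
    fun i jj => i ⟨jj.1, Finset.mem_insert_of_mem jj.2⟩ with hresD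
  set F₀ : Finset ({j : Fin m // j ∈ D} → ℕ) := F.image resD with hF₀
  set G : Finset ℕ := F.image (fun i => i ⟨j₀, hj₀D'⟩) with hG
  set base : ({j : Fin m // j ∈ D} → ℕ) → (∀ j, X j) :=
    fun i₀ j => if h : j ∈ D then x j (i₀ ⟨j, h⟩) else z j with hbase
  set w : ({j : Fin m // j ∈ D} → ℕ) → ℕ → Y :=
    fun i₀ g => T (Function.update (base i₀) j₀ (x j₀ g)) with hw
  set A : ℕ → ℝ := fun g => ∑ i₀ ∈ F₀, ‖w i₀ g‖ ^ r with hA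
  have hA0 : ∀ g, 0 ≤ A g :=
    fun g => Finset.sum_nonneg fun _ _ => Real.rpow_nonneg (norm_nonneg _) r
  set S : ℝ := ∑ g ∈ G, A g ^ (t / r) with hS
  have hS0 : 0 ≤ S := Finset.sum_nonneg fun g _ => Real.rpow_nonneg (hA0 g) _
  -- Step 1: the total sum is at most S
  have htotal : ∑ i ∈ F,
      ‖T (fun j => if h : j ∈ insert j₀ D then x j (i ⟨j, h⟩) else z j)‖ ^ t ≤ S := by
    have hkey : ∀ i : ({j : Fin m // j ∈ insert j₀ D} → ℕ),
        (fun j => if h : j ∈ insert j₀ D then x j (i ⟨j, h⟩) else z j)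
        = Function.update (base (resD i)) j₀ (x j₀ (i ⟨j₀, hj₀D'⟩)) := by
      intro i
      funext j
      rcases eq_or_ne j j₀ with rfl | hjj
      · rw [Function.update_self]
        rw [dif_pos hj₀D']
      · rw [Function.update_of_ne hjj]
        by_cases hD : j ∈ D
        · rw [dif_pos (Finset.mem_insert_of_mem hD)]
          simp only [hbase, dif_pos hD, hresD]
        · have hD' : j ∉ insert j₀ D := by
            simp [Finset.mem_insert, hjj, hD]
          rw [dif_neg hD']
          simp only [hbase, dif_neg hD]
    have hinj : ∀ i ∈ F, ∀ i' ∈ F,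
        (fun i => (resD i, i ⟨j₀, hj₀D'⟩)) i = (fun i => (resD i, i ⟨j₀, hj₀D'⟩)) i' →
        i = i' := by
      intro i _ i' _ hee
      have h1 : resD i = resD i' := congrArg Prod.fst hee
      have h2 : i ⟨j₀, hj₀D'⟩ = i' ⟨j₀, hj₀D'⟩ := congrArg Prod.snd hee
      funext jj
      obtain ⟨j, hj⟩ := jj
      rcases Finset.mem_insert.mp hj with rfl | hD
      · exact h2
      · exact congrFun h1 ⟨j, hD⟩
    have hsub : F.image (fun i => (resD i, i ⟨j₀, hj₀D'⟩)) ⊆ F₀ ×ˢ G := by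
      intro pr hpr
      obtain ⟨i, hi, rfl⟩ := Finset.mem_image.mp hpr
      exact Finset.mem_product.mpr ⟨Finset.mem_image_of_mem _ hi, Finset.mem_image_of_mem _ hi⟩
    calc ∑ i ∈ F, ‖T (fun j => if h : j ∈ insert j₀ D then x j (i ⟨j, h⟩) else z j)‖ ^ t
        = ∑ i ∈ F, ‖w (resD i) (i ⟨j₀, hj₀D'⟩)‖ ^ t :=
          Finset.sum_congr rfl fun i _ => by rw [hkey i]
      _ = ∑ pr ∈ F.image (fun i => (resD i, i ⟨j₀, hj₀D'⟩)), ‖w pr.1 pr.2‖ ^ t := by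
          rw [Finset.sum_image hinj]
      _ ≤ ∑ pr ∈ F₀ ×ˢ G, ‖w pr.1 pr.2‖ ^ t :=
          Finset.sum_le_sum_of_subset_of_nonneg hsub
            (fun _ _ _ => Real.rpow_nonneg (norm_nonneg _) t)
      _ = ∑ i₀ ∈ F₀, ∑ g ∈ G, ‖w i₀ g‖ ^ t := by rw [Finset.sum_product]
      _ = ∑ g ∈ G, ∑ i₀ ∈ F₀, ‖w i₀ g‖ ^ t := Finset.sum_comm
      _ ≤ ∑ g ∈ G, A g ^ (t / r) :=
          Finset.sum_le_sum fun g _ => my_lp_mono F₀ _ (fun _ => norm_nonneg _) hr0 hrt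
  -- Step 2: the key claim
  have hQ : ∀ lam : ℕ → ℝ, (∀ g, 0 ≤ lam g) →
      (∀ φ : X j₀ →L[ℝ] ℝ, ‖φ‖ ≤ 1 → ∑ g ∈ G, lam g * |φ (x j₀ g)| ≤ 1) →
      ∑ g ∈ G, lam g ^ r * A g ≤ (Cq * κ) ^ r := by
    intro lam hlam hlamP
    set N := G.card with hN
    set σ : Fin N → ℕ := fun k' => ((G.equivFin.symm k') : ℕ) with hσ
    have hGsum : ∀ f : ℕ → ℝ, ∑ g ∈ G, f g = ∑ k', f (σ k') := by
      intro f
      rw [← Finset.sum_coe_sort G f]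
      exact (Equiv.sum_comp G.equivFin.symm (fun g : G => f g)).symm
    set u : (Fin N → Bool) → X j₀ :=
      fun ε => ∑ k', (if ε k' then (1:ℝ) else -1) • (lam (σ k') • x j₀ (σ k')) with hu
    have hu1 : ∀ ε, ‖u ε‖ ≤ 1 := by
      intro ε
      apply my_norm_le_one
      intro φ hφ
      have h1 : φ (u ε) = ∑ k', (if ε k' then (1:ℝ) else -1) * (lam (σ k') * φ (x j₀ (σ k'))) := by
        simp only [hu, map_sum, map_smul, smul_eq_mul]
      rw [h1]
      calc |∑ k', (if ε k' then (1:ℝ) else -1) * (lam (σ k') * φ (x j₀ (σ k')))|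
          ≤ ∑ k', |(if ε k' then (1:ℝ) else -1) * (lam (σ k') * φ (x j₀ (σ k')))| :=
            Finset.abs_sum_le_sum_abs _ _
        _ = ∑ k', lam (σ k') * |φ (x j₀ (σ k'))| := by
            refine Finset.sum_congr rfl fun k' _ => ?_
            rw [abs_mul, abs_mul, abs_of_nonneg (hlam _)]
            rcases Bool.eq_false_or_eq_true (ε k') with hb | hb <;> simp [hb]
        _ = ∑ g ∈ G, lam g * |φ (x j₀ g)| :=
            (hGsum (fun g => lam g * |φ (x j₀ g)|)).symm
        _ ≤ 1 := hlamP φ hφ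
    set z' : (Fin N → Bool) → ∀ j, X j := fun ε => Function.update z j₀ (u ε) with hz'
    have hz'le : ∀ ε, ∀ j ∉ D, ‖z' ε j‖ ≤ 1 := by
      intro ε j hj
      rcases eq_or_ne j j₀ with rfl | hjj
      · simp only [hz', Function.update_self]
        exact hu1 ε
      · simp only [hz', Function.update_of_ne hjj]
        exact hz j (by simp [Finset.mem_insert, hjj, hj])
    have hxD : ∀ j ∈ D, WeakNormLEOne (pp j) (x j) :=
      fun j hj => hx j (Finset.mem_insert_of_mem hj)
    set R : ({j : Fin m // j ∈ D} → ℕ) → (Fin N → Bool) → ℝ :=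
      fun i₀ ε => ‖T (fun j => if h : j ∈ D then x j (i₀ ⟨j, h⟩) else z' ε j)‖ with hR
    have hIHε : ∀ ε, ∑ i₀ ∈ F₀, R i₀ ε ^ r ≤ κ ^ r := fun ε => hIH (z' ε) (hz'le ε) x hxD F₀
    set y : ({j : Fin m // j ∈ D} → ℕ) → Fin N → Y :=
      fun i₀ k' => lam (σ k') • w i₀ (σ k') with hy
    have hTu : ∀ i₀ (ε : Fin N → Bool),
        (∑ k', (if ε k' then (1:ℝ) else -1) • y i₀ k')
          = T (fun j => if h : j ∈ D then x j (i₀ ⟨j, h⟩) else z' ε j) := by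
      intro i₀ ε
      have harg : (fun j => if h : j ∈ D then x j (i₀ ⟨j, h⟩) else z' ε j)
          = Function.update (base i₀) j₀ (u ε) := by
        funext j
        rcases eq_or_ne j j₀ with rfl | hjj
        · simp only [hz', Function.update_self, dif_neg hj₀]
        · simp only [Function.update_of_ne hjj]
          by_cases hD : j ∈ D
          · simp only [hbase, dif_pos hD]
          · simp only [hbase, dif_neg hD, hz', Function.update_of_ne hjj]
      rw [harg]
      have hmap := T.toMultilinearMap.map_update_sum (Finset.univ : Finset (Fin N)) j₀
        (fun k' => (if ε k' then (1:ℝ) else -1) • (lam (σ k') • x j₀ (σ k'))) (base i₀)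
      simp only [ContinuousMultilinearMap.coe_coe] at hmap
      have hUe : Function.update (base i₀) j₀ (u ε)
          = Function.update (base i₀) j₀
            (∑ k', (if ε k' then (1:ℝ) else -1) • (lam (σ k') • x j₀ (σ k'))) := by
        rw [hu]
      rw [hUe, hmap]
      refine Finset.sum_congr rfl fun k' _ => ?_
      rw [T.map_update_smul, T.map_update_smul]
    have hper : ∀ i₀, ∑ g ∈ G, lam g ^ r * ‖w i₀ g‖ ^ r
        ≤ Cq ^ r * ((∑ ε : Fin N → Bool, R i₀ ε ^ r) / 2 ^ N) := by
      intro i₀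
      have hynorm : ∀ k', ‖y i₀ k'‖ = lam (σ k') * ‖w i₀ (σ k')‖ := by
        intro k'
        simp only [hy]
        rw [norm_smul, Real.norm_eq_abs, abs_of_nonneg (hlam _)]
      have hcot' := hcot N (y i₀)
      have hsig : ∀ ε : Fin N → Bool, ‖∑ k', (if ε k' then (1:ℝ) else -1) • y i₀ k'‖ = R i₀ ε :=
        fun ε => by rw [hTu i₀ ε]
      have havg0 : (0:ℝ) ≤ (∑ ε : Fin N → Bool,
          ‖∑ k', (if ε k' then (1:ℝ) else -1) • y i₀ k'‖ ^ 2) / 2 ^ N := by positivity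
      have hcard : ((Fintype.card (Fin N → Bool) : ℝ)) = 2 ^ N := by
        rw [Fintype.card_fun]
        push_cast
        simp
      calc ∑ g ∈ G, lam g ^ r * ‖w i₀ g‖ ^ r
          = ∑ k', (lam (σ k') * ‖w i₀ (σ k')‖) ^ r := by
            rw [hGsum (fun g => lam g ^ r * ‖w i₀ g‖ ^ r)]
            exact Finset.sum_congr rfl fun k' _ =>
              (Real.mul_rpow (hlam _) (norm_nonneg _)).symm
        _ = ∑ k', ‖y i₀ k'‖ ^ r := by
            refine Finset.sum_congr rfl fun k' _ => ?_
            rw [hynorm k']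
        _ ≤ (∑ k', ‖y i₀ k'‖ ^ q) ^ (r / q) :=
            my_lp_mono Finset.univ _ (fun _ => norm_nonneg _) hq0 hqr
        _ = ((∑ k', ‖y i₀ k'‖ ^ q) ^ ((1:ℝ) / q)) ^ r := by
            rw [← Real.rpow_mul
              (Finset.sum_nonneg fun _ _ => Real.rpow_nonneg (norm_nonneg _) _)]
            congr 1
            ring
        _ ≤ (Cq * ((∑ ε : Fin N → Bool,
              ‖∑ k', (if ε k' then (1:ℝ) else -1) • y i₀ k'‖ ^ 2) / 2 ^ N) ^ ((1:ℝ)/2)) ^ r := by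
            apply Real.rpow_le_rpow
              (Real.rpow_nonneg
                (Finset.sum_nonneg fun _ _ => Real.rpow_nonneg (norm_nonneg _) _) _)
              hcot' hr0.le
        _ = Cq ^ r * (((∑ ε : Fin N → Bool,
              ‖∑ k', (if ε k' then (1:ℝ) else -1) • y i₀ k'‖ ^ 2) / 2 ^ N) ^ ((1:ℝ)/2)) ^ r :=
            Real.mul_rpow hCq.le (Real.rpow_nonneg havg0 _)
        _ = Cq ^ r * ((∑ ε : Fin N → Bool,
              ‖∑ k', (if ε k' then (1:ℝ) else -1) • y i₀ k'‖ ^ 2) / 2 ^ N) ^ (r / 2) := by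
            rw [← Real.rpow_mul havg0]
            congr 2
            ring
        _ ≤ Cq ^ r * ((∑ ε : Fin N → Bool,
              (‖∑ k', (if ε k' then (1:ℝ) else -1) • y i₀ k'‖ ^ 2) ^ (r / 2)) / 2 ^ N) := by
            apply mul_le_mul_of_nonneg_left _ (Real.rpow_nonneg hCq.le r)
            have hj := my_jensen (ι := (Fin N → Bool))
              (fun ε => ‖∑ k', (if ε k' then (1:ℝ) else -1) • y i₀ k'‖ ^ 2)
              (fun ε => by positivity) (e := r / 2) (by linarith)
            rwa [hcard] at hj
        _ = Cq ^ r * ((∑ ε : Fin N → Bool, R i₀ ε ^ r) / 2 ^ N) := by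
            have hconv : ∀ ε : Fin N → Bool,
                (‖∑ k', (if ε k' then (1:ℝ) else -1) • y i₀ k'‖ ^ 2) ^ (r / 2)
                  = R i₀ ε ^ r := by
              intro ε
              rw [← Real.rpow_natCast ‖∑ k', (if ε k' then (1:ℝ) else -1) • y i₀ k'‖ 2,
                ← Real.rpow_mul (norm_nonneg _), hsig ε]
              norm_num
              congr 1
              ring
            simp_rw [hconv]
    calc ∑ g ∈ G, lam g ^ r * A g
        = ∑ i₀ ∈ F₀, ∑ g ∈ G, lam g ^ r * ‖w i₀ g‖ ^ r := by
          rw [Finset.sum_comm]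
          exact Finset.sum_congr rfl fun g _ => by rw [hA, Finset.mul_sum]
      _ ≤ ∑ i₀ ∈ F₀, Cq ^ r * ((∑ ε : Fin N → Bool, R i₀ ε ^ r) / 2 ^ N) :=
          Finset.sum_le_sum fun i₀ _ => hper i₀
      _ = Cq ^ r * ((∑ ε : Fin N → Bool, ∑ i₀ ∈ F₀, R i₀ ε ^ r) / 2 ^ N) := by
          rw [← Finset.mul_sum, ← Finset.sum_div, Finset.sum_comm]
      _ ≤ Cq ^ r * ((∑ _ε : Fin N → Bool, κ ^ r) / 2 ^ N) := by
          apply mul_le_mul_of_nonneg_left _ (Real.rpow_nonneg hCq.le r)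
          exact div_le_div_of_nonneg_right
            (Finset.sum_le_sum fun ε _ => hIHε ε) (by positivity)
      _ = Cq ^ r * κ ^ r := by
          rw [Finset.sum_const, Finset.card_univ, Fintype.card_fun, nsmul_eq_mul]
          push_cast
          simp only [Fintype.card_bool, Fintype.card_fin, Nat.cast_ofNat]
          field_simp
      _ = (Cq * κ) ^ r := (Real.mul_rpow hCq.le hκ.le).symm
  -- Step 3: conclude S ≤ (Cq * κ) ^ t
  have hfinal : S ≤ (Cq * κ) ^ t := by
    rcases eq_or_lt_of_le hp1 with hpeq | hplt
    · -- pp j₀ = 1, so t = r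
      have htr : t = r := by
        rw [← hpeq] at ht
        norm_num at ht
        linarith
      have hSA : S = ∑ g ∈ G, A g := by
        rw [hS]
        refine Finset.sum_congr rfl fun g _ => ?_
        rw [htr, div_self hr0.ne', Real.rpow_one]
      have hQ1 := hQ (fun _ => 1) (fun _ => zero_le_one) ?_
      · rw [hSA, htr]
        calc ∑ g ∈ G, A g = ∑ g ∈ G, (1:ℝ) ^ r * A g := by
              refine Finset.sum_congr rfl fun g _ => ?_
              rw [Real.one_rpow, one_mul]
          _ ≤ (Cq * κ) ^ r := hQ1
      · intro φ hφ
        have hwk := hx j₀ hj₀D' φ hφ G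
        rw [← hpeq] at hwk
        calc ∑ g ∈ G, 1 * |φ (x j₀ g)| = ∑ g ∈ G, |φ (x j₀ g)| ^ (1:ℝ) := by
              refine Finset.sum_congr rfl fun g _ => ?_
              rw [one_mul, Real.rpow_one]
          _ ≤ 1 := hwk
    · -- 1 < pp j₀
      set ps : ℝ := (pp j₀).conjExponent with hps
      have hconj : (pp j₀).HolderConjugate ps := Real.HolderConjugate.conjExponent hplt
      have hps0 : 0 < ps := hconj.symm.pos
      have hps_inv : 1 - 1 / pp j₀ = 1 / ps := by
        have h2 := hconj.inv_add_inv_eq_one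
        rw [one_div, one_div]
        linarith
      have ht' : 1 / t = 1 / r - 1 / ps := by rw [ht, hps_inv]
      have hps' : ps⁻¹ = r⁻¹ - t⁻¹ := by
        have h2 : (1:ℝ)/ps = 1/r - 1/t := by linarith
        simpa [one_div] using h2
      rcases eq_or_lt_of_le hS0 with hSz | hSpos
      · rw [← hSz]
        exact (Real.rpow_pos_of_pos (by positivity) t).le
      · set lam : ℕ → ℝ := fun g => (A g ^ (t / r) / S) ^ ps⁻¹ with hlam
        have hlam0 : ∀ g, 0 ≤ lam g :=
          fun g => Real.rpow_nonneg (div_nonneg (Real.rpow_nonneg (hA0 g) _) hS0) _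
        have hlampow : ∀ g, lam g ^ ps = A g ^ (t / r) / S := by
          intro g
          simp only [hlam]
          rw [← Real.rpow_mul (div_nonneg (Real.rpow_nonneg (hA0 g) _) hS0),
            inv_mul_cancel₀ hps0.ne', Real.rpow_one]
        have hlamsum : ∑ g ∈ G, lam g ^ ps = 1 := by
          simp_rw [hlampow]
          rw [← Finset.sum_div, ← hS, div_self hSpos.ne']
        have hQlam := hQ lam hlam0 ?_
        · -- compute ∑ lam^r A = S^(r/t)
          have harith : t / r * (ps⁻¹ * r) + 1 = t / r := by
            rw [hps']
            field_simp
            ring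
          have hexp : 1 - r / ps = r / t := by
            rw [div_eq_mul_inv r ps, hps']
            field_simp
            ring
          have he : ∀ g, lam g ^ r * A g = A g ^ (t / r) / S ^ (r / ps) := by
            intro g
            have h3 : lam g ^ r = A g ^ (t / r * (ps⁻¹ * r)) / S ^ (r / ps) := by
              simp only [hlam]
              rw [← Real.rpow_mul (div_nonneg (Real.rpow_nonneg (hA0 g) _) hS0),
                Real.div_rpow (Real.rpow_nonneg (hA0 g) _) hS0,
                ← Real.rpow_mul (hA0 g)]
              congr 1
              ring
            rw [h3, div_mul_eq_mul_div]
            congr 1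
            have h4 := Real.rpow_add' (x := A g) (y := t / r * (ps⁻¹ * r)) (z := 1) (hA0 g)
              (by rw [harith]; positivity)
            rw [Real.rpow_one] at h4
            rw [← h4, harith]
          have hcomp : ∑ g ∈ G, lam g ^ r * A g = S ^ (r / t) := by
            simp_rw [he]
            rw [← Finset.sum_div, ← hS, ← hexp, Real.rpow_sub hSpos, Real.rpow_one]
          rw [hcomp] at hQlam
          have h5 : r / t * (t / r) = 1 := by field_simp
          calc S = (S ^ (r / t)) ^ (t / r) := by
                rw [← Real.rpow_mul hS0, h5, Real.rpow_one]
            _ ≤ ((Cq * κ) ^ r) ^ (t / r) :=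
                Real.rpow_le_rpow (Real.rpow_nonneg hS0 _) hQlam (by positivity)
            _ = (Cq * κ) ^ t := by
                rw [← Real.rpow_mul (by positivity)]
                congr 1
                field_simp
        · -- the weight condition, via Young's inequality
          intro φ hφ
          have hwk := hx j₀ hj₀D' φ hφ G
          have hyoung : ∀ g ∈ G, lam g * |φ (x j₀ g)|
              ≤ lam g ^ ps / ps + |φ (x j₀ g)| ^ pp j₀ / pp j₀ := by
            intro g _
            exact Real.young_inequality_of_nonneg (hlam0 g) (abs_nonneg _) hconj.symm
          calc ∑ g ∈ G, lam g * |φ (x j₀ g)|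
              ≤ ∑ g ∈ G, (lam g ^ ps / ps + |φ (x j₀ g)| ^ pp j₀ / pp j₀) :=
                Finset.sum_le_sum hyoung
            _ = (∑ g ∈ G, lam g ^ ps) / ps + (∑ g ∈ G, |φ (x j₀ g)| ^ pp j₀) / pp j₀ := by
                rw [Finset.sum_add_distrib, Finset.sum_div, Finset.sum_div]
            _ ≤ 1 / ps + 1 / pp j₀ := by
                apply add_le_add
                · rw [hlamsum]
                · exact div_le_div_of_nonneg_right hwk hp0.le
            _ = 1 := by
                have h2 := hconj.inv_add_inv_eq_one
                rw [one_div, one_div]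
                linarith
  exact le_trans htotal hfinal

end Aux

set_option maxHeartbeats 2000000 in
/-- Theorem 2.3 (main theorem 3): if some `r_k ≥ q` (the cotype of `Y`), then coordinatewise
`(r_k, p_k)`-summability in the blocks of a partition implies multiple `(s, 𝐪)`-summability
with `1/s = 1/r_k − Σ_{j≠k} |C_j|/p_j*`. -/
theorem stmt4 {m n : ℕ} (hm : 2 ≤ m) (hn : 2 ≤ n)
    {X : Fin m → Type*} [∀ j, NormedAddCommGroup (X j)] [∀ j, NormedSpace ℝ (X j)]
    [∀ j, CompleteSpace (X j)]
    {Y : Type*} [NormedAddCommGroup Y] [NormedSpace ℝ Y] [CompleteSpace Y]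
    {q : ℝ} (hq : 2 ≤ q) (hY : HasCotype Y q)
    (C : Fin n → Finset (Fin m))
    (hCne : ∀ k, (C k).Nonempty)
    (hCdisj : ∀ k l, k ≠ l → Disjoint (C k) (C l))
    (hCcover : ∀ j : Fin m, ∃ k, j ∈ C k)
    (r p : Fin n → ℝ) (hr : ∀ k, 1 ≤ r k) (hp : ∀ k, 1 ≤ p k)
    (k : Fin n) (hk : q ≤ r k)
    (qq : Fin m → ℝ) (hqq : ∀ l, ∀ j ∈ C l, qq j = p l)
    (s : ℝ)
    (hs : 1 / s = 1 / r k - ∑ j ∈ Finset.univ.erase k, (C j).card * (1 - 1 / p j))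
    (hspos : 0 < s)
    (T : ContinuousMultilinearMap ℝ X Y)
    (hT : ∀ l, CoordSumming T (C l) (r l) (p l)) :
    MultipleSumming T s qq := by
  classical
  have hrk0 : (0:ℝ) < r k := by linarith [hr k]
  have hq0 : (0:ℝ) < q := by linarith
  have hqq1 : ∀ j, 1 ≤ qq j := by
    intro j
    obtain ⟨l, hl⟩ := hCcover j
    rw [hqq l j hl]
    exact hp l
  have hterm0 : ∀ j : Fin m, 0 ≤ 1 - 1 / qq j := by
    intro j
    have h1 : 1 / qq j ≤ 1 := by
      rw [div_le_one (by linarith [hqq1 j])]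
      exact hqq1 j
    linarith
  have hcover' : Finset.univ \ C k = (Finset.univ.erase k).biUnion C := by
    ext j
    simp only [Finset.mem_sdiff, Finset.mem_univ, true_and, Finset.mem_biUnion,
      Finset.mem_erase, and_true]
    constructor
    · intro hjk
      obtain ⟨l, hl⟩ := hCcover j
      refine ⟨l, ?_, hl⟩
      intro heq2
      exact hjk (heq2 ▸ hl)
    · rintro ⟨l, hlk, hjl⟩
      exact fun hjk => (Finset.disjoint_left.mp (hCdisj l k hlk)) hjl hjk
  have hsumfull : ∑ j ∈ Finset.univ \ C k, (1 - 1 / qq j)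
      = ∑ l ∈ Finset.univ.erase k, ((C l).card : ℝ) * (1 - 1 / p l) := by
    rw [hcover', Finset.sum_biUnion (fun l _ l' _ hne => hCdisj l l' hne)]
    refine Finset.sum_congr rfl fun l _ => ?_
    calc ∑ j ∈ C l, (1 - 1 / qq j) = ∑ _j ∈ C l, (1 - 1 / p l) :=
          Finset.sum_congr rfl fun j hj => by rw [hqq l j hj]
      _ = ((C l).card : ℝ) * (1 - 1 / p l) := by
          rw [Finset.sum_const, nsmul_eq_mul]
  have hδ : ∀ E : Finset (Fin m), E ⊆ Finset.univ \ C k →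
      1 / s ≤ 1 / r k - ∑ j ∈ E, (1 - 1 / qq j) := by
    intro E hE
    have h1 : ∑ j ∈ E, (1 - 1 / qq j) ≤ ∑ j ∈ Finset.univ \ C k, (1 - 1 / qq j) :=
      Finset.sum_le_sum_of_subset_of_nonneg hE fun j _ _ => hterm0 j
    have h2 := hs
    rw [← hsumfull] at h2
    linarith
  have hspos' : (0:ℝ) < 1 / s := by positivity
  have main : ∀ E : Finset (Fin m), E ⊆ Finset.univ \ C k →
      CS T (C k ∪ E) ((1 / r k - ∑ j ∈ E, (1 - 1 / qq j))⁻¹) qq := by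
    intro E
    induction E using Finset.induction_on with
    | empty =>
      intro _
      have h0 : (1 / r k - ∑ j ∈ (∅ : Finset (Fin m)), (1 - 1 / qq j))⁻¹ = r k := by
        rw [Finset.sum_empty, sub_zero, one_div, inv_inv]
      rw [h0, Finset.union_empty]
      obtain ⟨κ, hκ, hTk⟩ := hT k
      refine ⟨κ, hκ, ?_⟩
      intro z hz x hx F
      exact hTk z hz x (fun j hj => by rw [← hqq k j hj]; exact hx j hj) F
    | @insert j₀ E hj₀E ih =>
      intro hsub
      have hE : E ⊆ Finset.univ \ C k := (Finset.subset_insert _ _).trans hsub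
      have hj₀' : j₀ ∈ Finset.univ \ C k := hsub (Finset.mem_insert_self _ _)
      have hj₀Ck : j₀ ∉ C k := (Finset.mem_sdiff.mp hj₀').2
      have hj₀CE : j₀ ∉ C k ∪ E := by
        simp [Finset.mem_union, hj₀Ck, hj₀E]
      have hins : C k ∪ insert j₀ E = insert j₀ (C k ∪ E) := by
        ext a
        simp only [Finset.mem_union, Finset.mem_insert]
        tauto
      have hvE : 0 < 1 / r k - ∑ j ∈ E, (1 - 1 / qq j) :=
        lt_of_lt_of_le hspos' (hδ E hE)
      have hvE' : 0 < 1 / r k - ∑ j ∈ insert j₀ E, (1 - 1 / qq j) :=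
        lt_of_lt_of_le hspos' (hδ _ hsub)
      have hrE : q ≤ (1 / r k - ∑ j ∈ E, (1 - 1 / qq j))⁻¹ := by
        have h1 : 1 / r k - ∑ j ∈ E, (1 - 1 / qq j) ≤ 1 / r k := by
          have h2 := Finset.sum_nonneg (fun j (_ : j ∈ E) => hterm0 j)
          linarith
        calc q ≤ r k := hk
          _ = (1 / r k)⁻¹ := by rw [one_div, inv_inv]
          _ ≤ (1 / r k - ∑ j ∈ E, (1 - 1 / qq j))⁻¹ := inv_anti₀ hvE h1
      have heq : 1 / (1 / r k - ∑ j ∈ insert j₀ E, (1 - 1 / qq j))⁻¹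
          = 1 / (1 / r k - ∑ j ∈ E, (1 - 1 / qq j))⁻¹ - (1 - 1 / qq j₀) := by
        simp only [one_div, inv_inv]
        rw [Finset.sum_insert hj₀E]
        ring
      rw [hins]
      exact CS_step hq hY hj₀CE hrE (hqq1 j₀) heq (inv_pos.mpr hvE') (ih hE)
  have hfull := main (Finset.univ \ C k) (Finset.Subset.refl _)
  rw [Finset.union_sdiff_of_subset (Finset.subset_univ _)] at hfull
  have hsval : (1 / r k - ∑ j ∈ Finset.univ \ C k, (1 - 1 / qq j))⁻¹ = s := by
    rw [hsumfull, ← hs, one_div, inv_inv]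
  rw [hsval] at hfull
  obtain ⟨κ, hκ, hCS⟩ := hfull
  refine ⟨κ, hκ, ?_⟩
  intro x hx F
  have hemb : Function.Injective
      (fun (i : Fin m → ℕ) (jj : {j : Fin m // j ∈ (Finset.univ : Finset (Fin m))}) => i jj.1) := by
    intro i i' hee
    funext j
    exact congrFun hee ⟨j, Finset.mem_univ j⟩
  have hbound := hCS (fun j => 0) (fun j hj => (hj (Finset.mem_univ j)).elim) x
    (fun j _ => hx j) (F.map ⟨_, hemb⟩)
  rw [Finset.sum_map] at hbound
  refine le_trans (le_of_eq (Finset.sum_congr rfl fun i _ => ?_)) hbound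
  have harg : (fun j => x j (i j)) = (fun j =>
      if h : j ∈ (Finset.univ : Finset (Fin m)) then x j (i j) else (0 : X j)) := by
    funext j
    rw [dif_pos (Finset.mem_univ j)]
  rw [harg]
  rfl
end

section
/- Let T : X_1×⋯×X_m → Y be an m-linear map between Banach spaces, let r,s ∈ [1,∞) and 𝐩,𝐪 ∈ [1,∞)^m. Assume that T is multiple (r,𝐩)-summing, that q_k ≥ p_k for all k = 1,…,m, and that 1/r − Σ_{j=1}^m 1/p_j + Σ_{j=1}^m 1/q_j > 0. Then T is multiple (s,𝐪)-summing, where s is defined by 1/s − Σ_{j=1}^m 1/q_j = 1/r − Σ_{j=1}^m 1/p_j. -/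
/-- Two-factor finite Hölder inequality with exponents summing to 1. -/
lemma holder2 {ι : Type*} (F : Finset ι) (x y : ι → ℝ)
    (hx : ∀ i ∈ F, 0 ≤ x i) (hy : ∀ i ∈ F, 0 ≤ y i)
    {α β : ℝ} (hα : 0 ≤ α) (hβ : 0 ≤ β) (hab : α + β = 1) :
    ∑ i ∈ F, x i ^ α * y i ^ β ≤ (∑ i ∈ F, x i) ^ α * (∑ i ∈ F, y i) ^ β := by
  set Xs := ∑ i ∈ F, x i with hXs
  set Ys := ∑ i ∈ F, y i with hYs
  have hXs0 : 0 ≤ Xs := Finset.sum_nonneg hx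
  have hYs0 : 0 ≤ Ys := Finset.sum_nonneg hy
  rcases lt_or_eq_of_le hXs0 with hX | hX
  · rcases lt_or_eq_of_le hYs0 with hY | hY
    · have key : ∀ i ∈ F, x i ^ α * y i ^ β ≤
          Xs ^ α * Ys ^ β * (α * (x i / Xs) + β * (y i / Ys)) := by
        intro i hi
        have h1 : x i ^ α * y i ^ β =
            Xs ^ α * Ys ^ β * ((x i / Xs) ^ α * (y i / Ys) ^ β) := by
          rw [Real.div_rpow (hx i hi) hXs0, Real.div_rpow (hy i hi) hYs0]
          have hXa : Xs ^ α ≠ 0 := ne_of_gt (Real.rpow_pos_of_pos hX _)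
          have hYb : Ys ^ β ≠ 0 := ne_of_gt (Real.rpow_pos_of_pos hY _)
          field_simp
        rw [h1]
        have := Real.geom_mean_le_arith_mean2_weighted hα hβ
          (div_nonneg (hx i hi) hXs0) (div_nonneg (hy i hi) hYs0) hab
        exact mul_le_mul_of_nonneg_left this
          (mul_nonneg (Real.rpow_nonneg hXs0 _) (Real.rpow_nonneg hYs0 _))
      calc ∑ i ∈ F, x i ^ α * y i ^ β
          ≤ ∑ i ∈ F, Xs ^ α * Ys ^ β * (α * (x i / Xs) + β * (y i / Ys)) :=
            Finset.sum_le_sum key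
        _ = Xs ^ α * Ys ^ β * (α * (Xs / Xs) + β * (Ys / Ys)) := by
            rw [← Finset.mul_sum]
            congr 1
            rw [Finset.sum_add_distrib, ← Finset.mul_sum, ← Finset.mul_sum,
              ← Finset.sum_div, ← Finset.sum_div]
        _ ≤ Xs ^ α * Ys ^ β := by
            rw [div_self (ne_of_gt hX), div_self (ne_of_gt hY), mul_one, mul_one, hab,
              mul_one]
    · have hy0 : ∀ i ∈ F, y i = 0 :=
        (Finset.sum_eq_zero_iff_of_nonneg hy).mp hY.symm
      rcases eq_or_lt_of_le hβ with hβ0 | hβ0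
      · simp only [← hβ0, Real.rpow_zero, mul_one]
        have hα1 : α = 1 := by linarith
        simp only [hα1, Real.rpow_one]
        exact le_of_eq hXs.symm |>.trans (le_of_eq rfl)
      · have hz : ∀ i ∈ F, x i ^ α * y i ^ β = 0 := by
          intro i hi
          rw [hy0 i hi, Real.zero_rpow (ne_of_gt hβ0), mul_zero]
        rw [Finset.sum_eq_zero hz]
        positivity
  · have hx0 : ∀ i ∈ F, x i = 0 :=
      (Finset.sum_eq_zero_iff_of_nonneg hx).mp hX.symm
    rcases eq_or_lt_of_le hα with hα0 | hα0
    · simp only [← hα0, Real.rpow_zero, one_mul]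
      have hβ1 : β = 1 := by linarith
      simp only [hβ1, Real.rpow_one]
      exact le_of_eq hYs.symm |>.trans (le_of_eq rfl)
    · have hz : ∀ i ∈ F, x i ^ α * y i ^ β = 0 := by
        intro i hi
        rw [hx0 i hi, Real.zero_rpow (ne_of_gt hα0), zero_mul]
      rw [Finset.sum_eq_zero hz]
      positivity

/-- Theorem 1.2 (inclusion theorem): if `T` is multiple `(r, 𝐩)`-summing, `q_k ≥ p_k` for
all `k` and `1/r − Σ 1/p_j + Σ 1/q_j > 0`, then `T` is multiple `(s, 𝐪)`-summing where
`1/s − Σ 1/q_j = 1/r − Σ 1/p_j`. -/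
theorem stmt10 {m : ℕ} (hm : 1 ≤ m) {X : Fin m → Type*} [∀ j, NormedAddCommGroup (X j)]
    [∀ j, NormedSpace ℝ (X j)] [∀ j, CompleteSpace (X j)]
    {Y : Type*} [NormedAddCommGroup Y] [NormedSpace ℝ Y] [CompleteSpace Y]
    (T : ContinuousMultilinearMap ℝ X Y)
    (r s : ℝ) (hr : 1 ≤ r) (hs1 : 1 ≤ s)
    (p q : Fin m → ℝ) (hp : ∀ k, 1 ≤ p k) (hq : ∀ k, 1 ≤ q k)
    (hpq : ∀ k, p k ≤ q k)
    (hT : MultipleSumming T r p)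
    (hpos : 0 < 1 / r - ∑ j, 1 / p j + ∑ j, 1 / q j)
    (hs : 1 / s - ∑ j, 1 / q j = 1 / r - ∑ j, 1 / p j) :
    MultipleSumming T s q := by
  obtain ⟨C, hC0, hTC⟩ := hT
  have hr0 : (0:ℝ) < r := lt_of_lt_of_le one_pos hr
  have hs0 : (0:ℝ) < s := lt_of_lt_of_le one_pos hs1
  have hp0 : ∀ k, (0:ℝ) < p k := fun k => lt_of_lt_of_le one_pos (hp k)
  have hq0 : ∀ k, (0:ℝ) < q k := fun k => lt_of_lt_of_le one_pos (hq k)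
  refine ⟨C, hC0, ?_⟩
  intro x hx F
  set a : (Fin m → ℕ) → ℝ := fun i => ‖T (fun j => x j (i j))‖ with ha
  have ha0 : ∀ i, 0 ≤ a i := fun i => norm_nonneg _
  rw [show ∑ i ∈ F, ‖T (fun j => x j (i j))‖ ^ s = ∑ i ∈ F, a i ^ s from rfl]
  set S : ℝ := ∑ i ∈ F, a i ^ s with hSdef
  have hS0 : 0 ≤ S := Finset.sum_nonneg fun i _ => Real.rpow_nonneg (ha0 i) s
  rcases eq_or_lt_of_le hS0 with hSz | hSpos
  · rw [← hSz]; positivity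
  -- main case : S > 0
  set e : Fin m → ℝ := fun j => 1 / p j - 1 / q j with he
  have he0 : ∀ j, 0 ≤ e j := by
    intro j
    have h1 : 1 / q j ≤ 1 / p j := one_div_le_one_div_of_le (hp0 j) (hpq j)
    simpa [he] using sub_nonneg.mpr h1
  set Sk : Fin m → ℕ → ℝ := fun j k => ∑ i ∈ F.filter (fun i => i j = k), a i ^ s
    with hSk
  have hSk0 : ∀ j k, 0 ≤ Sk j k :=
    fun j k => Finset.sum_nonneg fun i _ => Real.rpow_nonneg (ha0 i) s
  set σ : Fin m → ℕ → ℝ := fun j k => (Sk j k / S) ^ (e j) with hσ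
  have hσ0 : ∀ j k, 0 ≤ σ j k :=
    fun j k => Real.rpow_nonneg (div_nonneg (hSk0 j k) hS0) _
  set y : ∀ j, ℕ → X j := fun j k => σ j k • x j k with hy
  -- the modified sequences have weak ℓ^{p j} norm at most 1
  have hyw : ∀ j, WeakNormLEOne (p j) (y j) := by
    intro j φ hφ F'
    have hx' := hx j φ hφ F'
    have hexp : e j * p j + p j / q j = 1 := by
      have h1 := hp0 j
      have h2 := hq0 j
      simp only [he]
      field_simp
      ring
    have step1 : ∀ k ∈ F', |φ (y j k)| ^ p j =
        (Sk j k / S) ^ (e j * p j) * (|φ (x j k)| ^ q j) ^ (p j / q j) := by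
      intro k _
      have h1 : φ (y j k) = σ j k * φ (x j k) := by
        rw [show y j k = σ j k • x j k from rfl, map_smul, smul_eq_mul]
      have h2 : (σ j k) ^ p j = (Sk j k / S) ^ (e j * p j) := by
        rw [show σ j k = (Sk j k / S) ^ (e j) from rfl,
          ← Real.rpow_mul (div_nonneg (hSk0 j k) hS0)]
      have h3 : |φ (x j k)| ^ p j = (|φ (x j k)| ^ q j) ^ (p j / q j) := by
        rw [← Real.rpow_mul (abs_nonneg _)]
        congr 1
        rw [mul_comm, div_mul_cancel₀ _ (ne_of_gt (hq0 j))]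
      rw [h1, abs_mul, abs_of_nonneg (hσ0 j k),
        Real.mul_rpow (hσ0 j k) (abs_nonneg _), h2, h3]
    have hA : ∑ k ∈ F', Sk j k / S ≤ 1 := by
      rw [← Finset.sum_div]
      apply (div_le_one hSpos).mpr
      have h2 : ∑ k ∈ F', Sk j k = ∑ i ∈ F.filter (fun i => i j ∈ F'), a i ^ s := by
        simp only [hSk]
        exact Finset.sum_fiberwise_eq_sum_filter F F' (fun i => i j) (fun i => a i ^ s)
      rw [h2, hSdef]
      exact Finset.sum_le_sum_of_subset_of_nonneg (Finset.filter_subset _ _)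
        (fun i _ _ => Real.rpow_nonneg (ha0 i) s)
    calc ∑ k ∈ F', |φ (y j k)| ^ p j
        = ∑ k ∈ F', (Sk j k / S) ^ (e j * p j) * (|φ (x j k)| ^ q j) ^ (p j / q j) :=
          Finset.sum_congr rfl step1
      _ ≤ (∑ k ∈ F', Sk j k / S) ^ (e j * p j) *
            (∑ k ∈ F', |φ (x j k)| ^ q j) ^ (p j / q j) :=
          holder2 F' _ _ (fun k _ => div_nonneg (hSk0 j k) hS0)
            (fun k _ => Real.rpow_nonneg (abs_nonneg _) _)
            (mul_nonneg (he0 j) (hp0 j).le) (div_nonneg (hp0 j).le (hq0 j).le) hexp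
      _ ≤ 1 := by
          apply mul_le_one₀
          · exact Real.rpow_le_one
              (Finset.sum_nonneg fun k _ => div_nonneg (hSk0 j k) hS0) hA
              (mul_nonneg (he0 j) (hp0 j).le)
          · exact Real.rpow_nonneg
              (Finset.sum_nonneg fun k _ => Real.rpow_nonneg (abs_nonneg _) _) _
          · exact Real.rpow_le_one
              (Finset.sum_nonneg fun k _ => Real.rpow_nonneg (abs_nonneg _) _) hx'
              (div_nonneg (hp0 j).le (hq0 j).le)
  -- norms of the transformed vectors
  have hnorm : ∀ i ∈ F, ‖T (fun j => y j (i j))‖ = (∏ j, σ j (i j)) * a i := by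
    intro i _
    have h1 : T (fun j => y j (i j)) = (∏ j, σ j (i j)) • T (fun j => x j (i j)) := by
      rw [show (fun j => y j (i j)) = fun j => σ j (i j) • x j (i j) from rfl]
      exact T.map_smul_univ _ _
    rw [h1, norm_smul, Real.norm_eq_abs,
      abs_of_nonneg (Finset.prod_nonneg fun j _ => hσ0 j (i j))]
  -- the key exponent identity
  have hexp1 : (∑ j, e j * r) + r / s = 1 := by
    have h1 : ∑ j, e j * r = (∑ j, 1 / p j - ∑ j, 1 / q j) * r := by
      rw [← Finset.sum_mul]
      congr 1
      simp only [he]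
      rw [Finset.sum_sub_distrib]
    rw [h1]
    have h2 : r / s = r * (1 / s) := by ring
    have h3 : 1 / s = 1 / r - ∑ j, 1 / p j + ∑ j, 1 / q j := by linarith
    rw [h2, h3]
    field_simp
    ring
  -- key pointwise estimate
  have key : ∀ i ∈ F, a i ^ s / S * S ^ (r / s) ≤ ((∏ j, σ j (i j)) * a i) ^ r := by
    intro i hiF
    rcases eq_or_lt_of_le (ha0 i) with hai | hai
    · rw [← hai, Real.zero_rpow (ne_of_gt hs0), zero_div, zero_mul]
      positivity
    · set w : ℝ := a i ^ s / S with hw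
      have hw0 : 0 < w := div_pos (Real.rpow_pos_of_pos hai s) hSpos
      have hWa : ∀ j, w ≤ Sk j (i j) / S := by
        intro j
        have hnum : a i ^ s ≤ Sk j (i j) := by
          refine Finset.single_le_sum (f := fun i' => a i' ^ s)
            (fun i' _ => Real.rpow_nonneg (ha0 i') s) ?_
          exact Finset.mem_filter.mpr ⟨hiF, rfl⟩
        exact div_le_div_of_nonneg_right hnum hS0
      have hprod0 : 0 ≤ ∏ j, σ j (i j) := Finset.prod_nonneg fun j _ => hσ0 j (i j)
      have hRHS : ((∏ j, σ j (i j)) * a i) ^ r =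
          (∏ j, (Sk j (i j) / S) ^ (e j * r)) * (w ^ (r / s) * S ^ (r / s)) := by
        rw [Real.mul_rpow hprod0 (ha0 i)]
        congr 1
        · rw [← Real.finset_prod_rpow _ _ (fun j _ => hσ0 j (i j)) r]
          refine Finset.prod_congr rfl fun j _ => ?_
          rw [show σ j (i j) = (Sk j (i j) / S) ^ (e j) from rfl,
            ← Real.rpow_mul (div_nonneg (hSk0 j (i j)) hS0)]
        · rw [← Real.mul_rpow hw0.le hS0, hw, div_mul_cancel₀ _ (ne_of_gt hSpos),
            ← Real.rpow_mul (ha0 i)]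
          congr 1
          field_simp
      have hLB : ∏ j, w ^ (e j * r) ≤ ∏ j, (Sk j (i j) / S) ^ (e j * r) :=
        Finset.prod_le_prod (fun j _ => Real.rpow_nonneg hw0.le _)
          (fun j _ => Real.rpow_le_rpow hw0.le (hWa j) (mul_nonneg (he0 j) hr0.le))
      have hprodw : ∏ j, w ^ (e j * r) = w ^ (∑ j, e j * r) :=
        (Real.rpow_sum_of_pos hw0 _ _).symm
      calc a i ^ s / S * S ^ (r / s)
          = w ^ ((∑ j, e j * r) + r / s) * S ^ (r / s) := by
            rw [hexp1, Real.rpow_one]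
        _ = (∏ j, w ^ (e j * r)) * (w ^ (r / s) * S ^ (r / s)) := by
            rw [Real.rpow_add hw0, hprodw]
            ring
        _ ≤ (∏ j, (Sk j (i j) / S) ^ (e j * r)) * (w ^ (r / s) * S ^ (r / s)) := by
            refine mul_le_mul_of_nonneg_right hLB ?_
            exact mul_nonneg (Real.rpow_nonneg hw0.le _) (Real.rpow_nonneg hS0 _)
        _ = ((∏ j, σ j (i j)) * a i) ^ r := hRHS.symm
  -- summing the key estimate
  have key2 : S ^ (r / s) ≤ C ^ r := by
    have h1 : ∑ i ∈ F, a i ^ s / S * S ^ (r / s) = S ^ (r / s) := by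
      rw [← Finset.sum_mul, ← Finset.sum_div, ← hSdef, div_self (ne_of_gt hSpos),
        one_mul]
    have h2 : ∑ i ∈ F, ((∏ j, σ j (i j)) * a i) ^ r ≤ C ^ r := by
      have := hTC y hyw F
      calc ∑ i ∈ F, ((∏ j, σ j (i j)) * a i) ^ r
          = ∑ i ∈ F, ‖T (fun j => y j (i j))‖ ^ r :=
            Finset.sum_congr rfl fun i hi => by rw [hnorm i hi]
        _ ≤ C ^ r := this
    calc S ^ (r / s) = ∑ i ∈ F, a i ^ s / S * S ^ (r / s) := h1.symm
      _ ≤ ∑ i ∈ F, ((∏ j, σ j (i j)) * a i) ^ r := Finset.sum_le_sum key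
      _ ≤ C ^ r := h2
  -- conclude
  calc S = (S ^ (r / s)) ^ (s / r) := by
        rw [← Real.rpow_mul hS0, show r / s * (s / r) = 1 by field_simp, Real.rpow_one]
    _ ≤ (C ^ r) ^ (s / r) :=
        Real.rpow_le_rpow (Real.rpow_nonneg hS0 _) key2 (div_nonneg hs0.le hr0.le)
    _ = C ^ s := by
        rw [← Real.rpow_mul hC0.le, show r * (s / r) = s by field_simp]
end

section
/- Let m ≥ 1, let 1 ≤ p_1,…,p_m ≤ ∞, and let A : ℓ_{p_1}×⋯×ℓ_{p_m} → ℂ be a bounded m-linear form that is non-negative, i.e. A(e_{i_1},…,e_{i_m}) ≥ 0 for every multi-index 𝐢 ∈ ℕ^m. If ρ is defined by 1/ρ = 1 − Σ_{j=1}^m 1/p_j and 1/ρ > 0, then (Σ_{𝐢∈ℕ^m} A(e_{i_1},…,e_{i_m})^ρ)^{1/ρ} ≤ ‖A‖. -/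
open scoped ENNReal

lemma aux_norm_le_one {q : ℝ≥0∞} [Fact (1 ≤ q)] (c : ℕ → ℝ) (K : Finset ℕ)
    (h0 : ∀ k, 0 ≤ c k) (h1 : ∀ k, c k ≤ 1)
    (h2 : q ≠ ∞ → ∑ k ∈ K, c k ^ q.toReal ≤ 1) :
    ‖∑ k ∈ K, lp.single q k ((c k : ℂ))‖ ≤ 1 := by
  classical
  rcases eq_or_ne q ∞ with rfl | hq
  · refine lp.norm_le_of_forall_le zero_le_one fun k' => ?_
    have hcoord : (∑ k ∈ K, lp.single ∞ k ((c k : ℂ))) k'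
        = ∑ k ∈ K, (lp.single (∞ : ℝ≥0∞) k ((c k : ℂ)) : ∀ _ : ℕ, ℂ) k' := by
      rw [lp.coeFn_sum, Finset.sum_apply]
    rw [hcoord]
    simp only [lp.single_apply, Pi.single_apply, Finset.sum_ite_eq, Finset.sum_dite_eq]
    split_ifs with h
    · rw [Complex.norm_real, Real.norm_eq_abs]
      exact abs_le.mpr ⟨by linarith [h0 k'], h1 k'⟩
    · simp
  · have hq1 : (1 : ℝ≥0∞) ≤ q := Fact.out
    have hq0 : 0 < q.toReal := ENNReal.toReal_pos (by intro h; rw [h] at hq1; simp at hq1) hq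
    have hns := lp.norm_sum_single (E := fun _ : ℕ => ℂ) hq0 (fun k => (c k : ℂ)) K
    have hle : ‖∑ k ∈ K, lp.single q k ((c k : ℂ))‖ ^ q.toReal ≤ 1 := by
      rw [hns]
      calc ∑ k ∈ K, ‖(c k : ℂ)‖ ^ q.toReal = ∑ k ∈ K, c k ^ q.toReal := by
            refine Finset.sum_congr rfl fun k _ => ?_
            rw [Complex.norm_real, Real.norm_eq_abs, abs_of_nonneg (h0 k)]
        _ ≤ 1 := h2 hq
    by_contra hcon
    push_neg at hcon
    have hlt := Real.rpow_lt_rpow zero_le_one hcon hq0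
    rw [Real.one_rpow] at hlt
    linarith

/-- Proposition 3.1 (non-negative Praciano-Pereira): if `A` is a bounded `m`-linear form on
`ℓ_{p₁} × ⋯ × ℓ_{p_m}` with `A(e_𝐢) ≥ 0` for all multi-indices `𝐢`, then
`(Σ_𝐢 A(e_𝐢)^ρ)^{1/ρ} ≤ ‖A‖` where `1/ρ = 1 − Σ_j 1/p_j > 0`. -/
theorem stmt11 {m : ℕ} (hm : 1 ≤ m) (p : Fin m → ℝ≥0∞) [∀ j, Fact (1 ≤ p j)]
    (A : ContinuousMultilinearMap ℂ (fun j : Fin m => lp (fun _ : ℕ => ℂ) (p j)) ℂ)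
    (hA : ∀ i : Fin m → ℕ,
      0 ≤ (A (fun j => lp.single (p j) (i j) (1 : ℂ))).re ∧
        (A (fun j => lp.single (p j) (i j) (1 : ℂ))).im = 0)
    (ρ : ℝ) (hρ : 1 / ρ = 1 - ∑ j, ((p j)⁻¹).toReal) (hρpos : 0 < 1 / ρ) :
    ∀ F : Finset (Fin m → ℕ),
      (∑ i ∈ F, (A (fun j => lp.single (p j) (i j) (1 : ℂ))).re ^ ρ) ^ (1 / ρ) ≤ ‖A‖ := by
  classical
  intro F
  set a : (Fin m → ℕ) → ℝ := fun i => (A (fun j => lp.single (p j) (i j) (1 : ℂ))).re with ha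
  have ha0 : ∀ i, 0 ≤ a i := fun i => (hA i).1
  have hρ0 : 0 < ρ := by
    rcases lt_trichotomy ρ 0 with h | h | h
    · exfalso; have : 1 / ρ < 0 := div_neg_of_pos_of_neg one_pos h; linarith
    · exfalso; rw [h] at hρpos; simp at hρpos
    · exact h
  set S : ℝ := ∑ i ∈ F, a i ^ ρ with hS
  have hSnn : 0 ≤ S := Finset.sum_nonneg fun i _ => Real.rpow_nonneg (ha0 i) ρ
  have key : S ^ (1 / ρ) ≤ ‖A‖ := by
    rcases eq_or_lt_of_le hSnn with hS0 | hSpos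
    · rw [← hS0, Real.zero_rpow (ne_of_gt hρpos)]
      exact norm_nonneg _
    -- main case
    set K : Fin m → Finset ℕ := fun j => F.image (fun i => i j) with hK
    set T : Fin m → ℕ → ℝ := fun j k => ∑ i ∈ F.filter (fun i => i j = k), a i ^ ρ with hT
    set c : Fin m → ℕ → ℝ := fun j k => (T j k / S) ^ ((p j)⁻¹).toReal with hc
    have hT0 : ∀ j k, 0 ≤ T j k := fun j k =>
      Finset.sum_nonneg fun i _ => Real.rpow_nonneg (ha0 i) ρ
    have hTS : ∀ j k, T j k ≤ S := fun j k =>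
      Finset.sum_le_sum_of_subset_of_nonneg (Finset.filter_subset _ _)
        (fun i _ _ => Real.rpow_nonneg (ha0 i) ρ)
    have hc0 : ∀ j k, 0 ≤ c j k := fun j k =>
      Real.rpow_nonneg (div_nonneg (hT0 j k) hSnn) _
    have hc1 : ∀ j k, c j k ≤ 1 := fun j k =>
      Real.rpow_le_one (div_nonneg (hT0 j k) hSnn)
        ((div_le_one hSpos).mpr (hTS j k)) ENNReal.toReal_nonneg
    set x : ∀ j, lp (fun _ : ℕ => ℂ) (p j) :=
      fun j => ∑ k ∈ K j, lp.single (p j) k ((c j k : ℂ)) with hx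
    -- norm bound
    have hxnorm : ∀ j, ‖x j‖ ≤ 1 := by
      intro j
      refine aux_norm_le_one (c j) (K j) (hc0 j) (hc1 j) ?_
      intro hpj
      have hp1 : (1 : ℝ≥0∞) ≤ p j := Fact.out
      have hpj0 : (p j) ≠ 0 := by intro h; rw [h] at hp1; simp at hp1
      have htpos : 0 < (p j).toReal := ENNReal.toReal_pos hpj0 hpj
      have hinv : ((p j)⁻¹).toReal = ((p j).toReal)⁻¹ := by
        rw [ENNReal.toReal_inv]
      have hsum : ∑ k ∈ K j, c j k ^ (p j).toReal = ∑ k ∈ K j, T j k / S := by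
        refine Finset.sum_congr rfl fun k _ => ?_
        show ((T j k / S) ^ ((p j)⁻¹).toReal) ^ (p j).toReal = T j k / S
        rw [hinv, ← Real.rpow_mul (div_nonneg (hT0 j k) hSnn),
          inv_mul_cancel₀ (ne_of_gt htpos), Real.rpow_one]
      rw [hsum, ← Finset.sum_div]
      have : ∑ k ∈ K j, T j k = S := by
        rw [hT, hS]
        exact Finset.sum_fiberwise_of_maps_to (fun i hi => Finset.mem_image_of_mem _ hi) _
      rw [this, div_self (ne_of_gt hSpos)]
    -- lower bound on A x
    have hlow : S ^ (1 / ρ) ≤ (A x).re := by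
      have hexp : A x = ∑ r ∈ Fintype.piFinset K,
          (((∏ j, c j (r j) : ℝ) : ℂ) * A (fun j => lp.single (p j) (r j) (1 : ℂ))) := by
        rw [hx]
        rw [ContinuousMultilinearMap.map_sum_finset]
        refine Finset.sum_congr rfl fun r _ => ?_
        have hsingle : (fun j => lp.single (p j) (r j) ((c j (r j) : ℂ)))
            = fun j => ((c j (r j) : ℂ) • lp.single (p j) (r j) (1 : ℂ)
                : lp (fun _ : ℕ => ℂ) (p j)) := by
          funext j
          rw [← lp.single_smul, smul_eq_mul, mul_one]
        rw [hsingle, A.map_smul_univ, smul_eq_mul]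
        congr 1
        push_cast
        rfl
      have hre : (A x).re = ∑ r ∈ Fintype.piFinset K, (∏ j, c j (r j)) * a r := by
        rw [hexp, Complex.re_sum]
        refine Finset.sum_congr rfl fun r _ => ?_
        have hmulre : ∀ (t : ℝ) (z : ℂ), ((t : ℂ) * z).re = t * z.re := fun t z => by
          simp [Complex.mul_re]
        rw [hmulre]
      have hsub : F ⊆ Fintype.piFinset K := by
        intro i hi
        rw [Fintype.mem_piFinset]
        exact fun j => Finset.mem_image_of_mem _ hi
      have step1 : ∑ i ∈ F, (∏ j, c j (i j)) * a i
          ≤ ∑ r ∈ Fintype.piFinset K, (∏ j, c j (r j)) * a r :=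
        Finset.sum_le_sum_of_subset_of_nonneg hsub fun r _ _ =>
          mul_nonneg (Finset.prod_nonneg fun j _ => hc0 j (r j)) (ha0 r)
      have hterm : ∀ i ∈ F, a i ^ ρ / S ^ (1 - 1/ρ) ≤ (∏ j, c j (i j)) * a i := by
        intro i hi
        rcases eq_or_lt_of_le (ha0 i) with hai | hai
        · rw [← hai, Real.zero_rpow (ne_of_gt hρ0), zero_div, mul_zero]
        · have h1 : ∀ j, (a i ^ ρ / S) ^ ((p j)⁻¹).toReal ≤ c j (i j) := by
            intro j
            refine Real.rpow_le_rpow (div_nonneg (Real.rpow_nonneg (ha0 i) ρ) hSnn)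
              ?_ ENNReal.toReal_nonneg
            have hTi : a i ^ ρ ≤ T j (i j) := by
              refine Finset.single_le_sum (f := fun i' => a i' ^ ρ)
                (fun i' _ => Real.rpow_nonneg (ha0 i') ρ) ?_
              exact Finset.mem_filter.mpr ⟨hi, rfl⟩
            exact (div_le_div_iff_of_pos_right hSpos).mpr hTi
          have h2 : ∏ j, (a i ^ ρ / S) ^ ((p j)⁻¹).toReal ≤ ∏ j, c j (i j) :=
            Finset.prod_le_prod (fun j _ => Real.rpow_nonneg
              (div_nonneg (Real.rpow_nonneg (ha0 i) ρ) hSnn) _) (fun j _ => h1 j)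
          have hbase : 0 < a i ^ ρ / S := div_pos (Real.rpow_pos_of_pos hai ρ) hSpos
          have h3 : ∏ j, (a i ^ ρ / S) ^ ((p j)⁻¹).toReal = (a i ^ ρ / S) ^ (1 - 1/ρ) := by
            rw [← Real.rpow_sum_of_pos hbase]
            congr 1
            linarith [hρ]
          have h4 : (a i ^ ρ / S) ^ (1 - 1/ρ) * a i = a i ^ ρ / S ^ (1 - 1/ρ) := by
            rw [Real.div_rpow (Real.rpow_nonneg (ha0 i) ρ) hSnn,
              ← Real.rpow_mul (le_of_lt hai)]
            have hexp2 : ρ * (1 - 1/ρ) = ρ - 1 := by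
              field_simp
            rw [hexp2, div_mul_eq_mul_div]
            congr 1
            calc a i ^ (ρ - 1) * a i = a i ^ (ρ - 1) * a i ^ (1 : ℝ) := by
                  rw [Real.rpow_one]
              _ = a i ^ (ρ - 1 + 1) := (Real.rpow_add hai _ _).symm
              _ = a i ^ ρ := by ring_nf
          calc a i ^ ρ / S ^ (1 - 1/ρ) = (a i ^ ρ / S) ^ (1 - 1/ρ) * a i := h4.symm
            _ ≤ (∏ j, c j (i j)) * a i :=
                mul_le_mul_of_nonneg_right (h3 ▸ h2) (ha0 i)
      have step2 : S ^ (1 / ρ) ≤ ∑ i ∈ F, (∏ j, c j (i j)) * a i := by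
        have heq : S ^ (1 / ρ) = ∑ i ∈ F, a i ^ ρ / S ^ (1 - 1/ρ) := by
          rw [← Finset.sum_div, ← hS]
          have heq2 : S ^ (1/ρ) * S ^ (1 - 1/ρ) = S := by
            rw [← Real.rpow_add hSpos]
            norm_num
          exact (eq_div_iff (ne_of_gt (Real.rpow_pos_of_pos hSpos _))).mpr heq2
        rw [heq]
        exact Finset.sum_le_sum hterm
      rw [hre]
      exact step2.trans step1
    have h1 : (A x).re ≤ ‖A x‖ := by
      calc (A x).re ≤ |(A x).re| := le_abs_self _
        _ ≤ ‖A x‖ := Complex.abs_re_le_norm _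
        _ = ‖A x‖ := rfl
    have h2 : ‖A x‖ ≤ ‖A‖ := by
      calc ‖A x‖ ≤ ‖A‖ * ∏ j, ‖x j‖ := A.le_opNorm x
        _ ≤ ‖A‖ * 1 := by
            refine mul_le_mul_of_nonneg_left ?_ (norm_nonneg A)
            exact Finset.prod_le_one (fun j _ => norm_nonneg _) (fun j _ => hxnorm j)
        _ = ‖A‖ := mul_one _
    linarith
  exact key
end

section
/- Let T : X_1×⋯×X_m → Y be an m-linear map between Banach spaces with Y of cotype q. Let 𝐪 ∈ [1,∞)^m and let C ⊂ {1,…,m}; define 𝐭 ∈ [1,∞)^C by t_k = q_k for k ∈ C. Let s,r ∈ [1,∞) satisfy 1/r = 1/s + Σ_{j∈C̄} 1/q_j*, with r ≥ q and s ≥ q_k for all k ∈ {1,…,m}. Then there exists κ > 0 (independent of T) such that π^mult_{s,𝐪}(T) ≤ κ · sup{ π^mult_{r,𝐭}(T^C(z)) : ‖z‖_{X^{C̄}} ≤ 1 }. -/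
/-- `B` is an admissible constant for the multiple `(r, 𝐩)`-summability of `T`; the least
such `B ≥ 0` is `π^mult_{r,𝐩}(T)`. -/
def MultSummingWith {m : ℕ} {X : Fin m → Type*} [∀ j, NormedAddCommGroup (X j)]
    [∀ j, NormedSpace ℝ (X j)] {Y : Type*} [NormedAddCommGroup Y] [NormedSpace ℝ Y]
    (T : ContinuousMultilinearMap ℝ X Y) (r : ℝ) (p : Fin m → ℝ) (B : ℝ) : Prop :=
  ∀ x : ∀ j, ℕ → X j, (∀ j, WeakNormLEOne (p j) (x j)) →
    ∀ F : Finset (Fin m → ℕ), ∑ i ∈ F, ‖T (fun j => x j (i j))‖ ^ r ≤ B ^ r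

/-- `B` is an admissible constant for the multiple `(r, 𝐭)`-summability of the restricted map
`T^C(z) : x ↦ T(x, z)` (a `|C|`-linear map); the least such `B ≥ 0` is
`π^mult_{r,𝐭}(T^C(z))`. -/
def CoordSummingWith {m : ℕ} {X : Fin m → Type*} [∀ j, NormedAddCommGroup (X j)]
    [∀ j, NormedSpace ℝ (X j)] {Y : Type*} [NormedAddCommGroup Y] [NormedSpace ℝ Y]
    (T : ContinuousMultilinearMap ℝ X Y) (C : Finset (Fin m)) (r : ℝ) (t : Fin m → ℝ)
    (z : ∀ j, X j) (B : ℝ) : Prop :=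
  ∀ x : ∀ j, ℕ → X j, (∀ j ∈ C, WeakNormLEOne (t j) (x j)) →
    ∀ F : Finset ({j : Fin m // j ∈ C} → ℕ),
      ∑ i ∈ F, ‖T (fun j => if h : j ∈ C then x j (i ⟨j, h⟩) else z j)‖ ^ r ≤ B ^ r

open Finset

section AuxLemmas


lemma aux_add_rpow {a b e : ℝ} (ha : 0 ≤ a) (hb : 0 ≤ b) (he : 1 ≤ e) :
    a ^ e + b ^ e ≤ (a + b) ^ e := by
  have h := NNReal.coe_le_coe.2 (NNReal.add_rpow_le_rpow_add a.toNNReal b.toNNReal he)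
  push_cast at h
  rwa [Real.coe_toNNReal a ha, Real.coe_toNNReal b hb] at h

lemma aux_sum_rpow_le {ι : Type*} (s : Finset ι) (f : ι → ℝ) (hf : ∀ i ∈ s, 0 ≤ f i) {e : ℝ}
    (he : 1 ≤ e) : ∑ i ∈ s, f i ^ e ≤ (∑ i ∈ s, f i) ^ e := by
  induction s using Finset.cons_induction with
  | empty => simp [Real.zero_rpow (by positivity : e ≠ 0)]
  | cons a s ha ih =>
    simp only [Finset.sum_cons]
    have h1 : ∑ i ∈ s, f i ^ e ≤ (∑ i ∈ s, f i) ^ e :=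
      ih fun i hi => hf i (Finset.mem_cons_of_mem hi)
    have h2 : f a ^ e + (∑ i ∈ s, f i) ^ e ≤ (f a + ∑ i ∈ s, f i) ^ e :=
      aux_add_rpow (hf a (Finset.mem_cons_self a s))
        (Finset.sum_nonneg fun i hi => hf i (Finset.mem_cons_of_mem hi)) he
    linarith

lemma aux_Lp_sum_le {ι α : Type*} (s : Finset ι) (t : Finset α) (f : ι → α → ℝ)
    (hf : ∀ i v, 0 ≤ f i v) {p : ℝ} (hp : 1 ≤ p) :
    (∑ v ∈ t, (∑ i ∈ s, f i v) ^ p) ^ (1/p) ≤ ∑ i ∈ s, (∑ v ∈ t, (f i v) ^ p) ^ (1/p) := by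
  induction s using Finset.cons_induction with
  | empty =>
    simp [Real.zero_rpow (by positivity : p ≠ 0),
      Real.zero_rpow (by simp; positivity : p⁻¹ ≠ 0)]
  | cons a s ha ih =>
    simp only [Finset.sum_cons]
    have habs : ∀ g : α → ℝ, (∀ v, 0 ≤ g v) →
        ∑ v ∈ t, |g v| ^ p = ∑ v ∈ t, g v ^ p := fun g hg =>
      Finset.sum_congr rfl fun v _ => by rw [abs_of_nonneg (hg v)]
    have key := Real.Lp_add_le t (fun v => f a v) (fun v => ∑ i ∈ s, f i v) hp
    rw [habs _ (fun v => add_nonneg (hf a v) (Finset.sum_nonneg fun i _ => hf i v)),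
        habs _ (fun v => hf a v),
        habs _ (fun v => Finset.sum_nonneg fun i _ => hf i v)] at key
    calc (∑ v ∈ t, (f a v + ∑ i ∈ s, f i v) ^ p) ^ (1/p)
        ≤ (∑ v ∈ t, f a v ^ p) ^ (1/p) + (∑ v ∈ t, (∑ i ∈ s, f i v) ^ p) ^ (1/p) := key
      _ ≤ (∑ v ∈ t, f a v ^ p) ^ (1/p) + ∑ i ∈ s, (∑ v ∈ t, f i v ^ p) ^ (1/p) := by linarith

lemma aux_cotype {Y : Type*} [NormedAddCommGroup Y] [NormedSpace ℝ Y]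
    {q r Cq : ℝ} (hq2 : 2 ≤ q) (hqr : q ≤ r) (hCq : 0 < Cq)
    (hYc : ∀ n : ℕ, ∀ y : Fin n → Y,
      (∑ k, ‖y k‖ ^ q) ^ (1 / q) ≤
        Cq * ((∑ ε : Fin n → Bool, ‖∑ k, (if ε k then (1 : ℝ) else -1) • y k‖ ^ 2) / 2 ^ n)
          ^ ((1 : ℝ) / 2))
    {ι : Type*} (V : Finset ι) {n : ℕ} (u : Fin n → ι → Y) {B : ℝ} (hB : 0 ≤ B)
    (hbound : ∀ ε : Fin n → Bool,
      ∑ v ∈ V, ‖∑ k, (if ε k then (1 : ℝ) else -1) • u k v‖ ^ r ≤ B ^ r) :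
    ∑ k : Fin n, ∑ v ∈ V, ‖u k v‖ ^ r ≤ (Cq * B) ^ r := by
  have hq0 : (0:ℝ) < q := by linarith
  have hr2 : (2:ℝ) ≤ r := le_trans hq2 hqr
  have hr0 : (0:ℝ) < r := by linarith
  set P : ℝ := r / 2 with hPdef
  have hP : (1:ℝ) ≤ P := by rw [hPdef]; linarith
  have hP0 : (0:ℝ) < P := by linarith
  set H : (Fin n → Bool) → ι → ℝ :=
    fun ε v => ‖∑ k, (if ε k then (1 : ℝ) else -1) • u k v‖ with hHdef
  set Avg : ι → ℝ := fun v => (∑ ε : Fin n → Bool, H ε v ^ 2) / 2 ^ n with hAvgdef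
  have hAvg0 : ∀ v, 0 ≤ Avg v := fun v => by
    apply div_nonneg _ (by positivity)
    exact Finset.sum_nonneg fun ε _ => by positivity
  -- Step A
  have stepA : ∀ v ∈ V, ∑ k : Fin n, ‖u k v‖ ^ r ≤ Cq ^ r * Avg v ^ P := by
    intro v _
    have a1 : ∑ k : Fin n, ‖u k v‖ ^ r ≤ (∑ k : Fin n, ‖u k v‖ ^ q) ^ (r / q) := by
      have e1 : ∀ k : Fin n, ‖u k v‖ ^ r = (‖u k v‖ ^ q) ^ (r / q) := by
        intro k
        rw [← Real.rpow_mul (norm_nonneg _)]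
        congr 1
        field_simp
      calc ∑ k : Fin n, ‖u k v‖ ^ r = ∑ k : Fin n, (‖u k v‖ ^ q) ^ (r / q) := by
            exact Finset.sum_congr rfl fun k _ => e1 k
        _ ≤ (∑ k : Fin n, ‖u k v‖ ^ q) ^ (r / q) :=
            aux_sum_rpow_le _ _ (fun k _ => Real.rpow_nonneg (norm_nonneg _) _)
              ((one_le_div hq0).2 hqr)
    have a2 : (∑ k : Fin n, ‖u k v‖ ^ q) ^ (r / q)
        = ((∑ k : Fin n, ‖u k v‖ ^ q) ^ (1 / q)) ^ r := by
      rw [← Real.rpow_mul (Finset.sum_nonneg fun k _ => Real.rpow_nonneg (norm_nonneg _) _)]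
      congr 1
      field_simp
    have a3 := hYc n (fun k => u k v)
    have a4 : ((∑ k : Fin n, ‖u k v‖ ^ q) ^ (1 / q)) ^ r ≤ (Cq * Avg v ^ ((1:ℝ)/2)) ^ r := by
      apply Real.rpow_le_rpow (Real.rpow_nonneg
        (Finset.sum_nonneg fun k _ => Real.rpow_nonneg (norm_nonneg _) _) _) _ hr0.le
      exact a3
    have a5 : (Cq * Avg v ^ ((1:ℝ)/2)) ^ r = Cq ^ r * Avg v ^ P := by
      rw [Real.mul_rpow hCq.le (Real.rpow_nonneg (hAvg0 v) _),
        ← Real.rpow_mul (hAvg0 v)]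
      congr 2
      rw [hPdef]; ring
    calc ∑ k : Fin n, ‖u k v‖ ^ r ≤ (∑ k : Fin n, ‖u k v‖ ^ q) ^ (r / q) := a1
      _ = ((∑ k : Fin n, ‖u k v‖ ^ q) ^ (1 / q)) ^ r := a2
      _ ≤ (Cq * Avg v ^ ((1:ℝ)/2)) ^ r := a4
      _ = Cq ^ r * Avg v ^ P := a5
  -- Step B
  have stepB : ∑ v ∈ V, Avg v ^ P ≤ B ^ r := by
    set G : (Fin n → Bool) → ι → ℝ := fun ε v => H ε v ^ 2 / 2 ^ n with hGdef
    have hG0 : ∀ ε v, 0 ≤ G ε v := fun ε v => by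
      apply div_nonneg (by positivity) (by positivity)
    have hAvgG : ∀ v, Avg v = ∑ ε : Fin n → Bool, G ε v := fun v => by
      rw [hAvgdef, hGdef]
      simp [Finset.sum_div]
    have key := aux_Lp_sum_le (Finset.univ : Finset (Fin n → Bool)) V G hG0 hP
    have perε : ∀ ε : Fin n → Bool,
        (∑ v ∈ V, G ε v ^ P) ^ (1/P) ≤ B ^ (2:ℝ) / 2 ^ n := by
      intro ε
      have e1 : ∀ v, G ε v ^ P = H ε v ^ r / ((2:ℝ) ^ n) ^ P := by
        intro v
        rw [hGdef]
        rw [Real.div_rpow (by positivity) (by positivity)]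
        congr 1
        rw [← Real.rpow_natCast (H ε v) 2, ← Real.rpow_mul (norm_nonneg _)]
        congr 1
        push_cast
        rw [hPdef]; ring
      have e2 : ∑ v ∈ V, G ε v ^ P ≤ B ^ r / ((2:ℝ) ^ n) ^ P := by
        calc ∑ v ∈ V, G ε v ^ P = (∑ v ∈ V, H ε v ^ r) / ((2:ℝ) ^ n) ^ P := by
              rw [Finset.sum_congr rfl fun v _ => e1 v, Finset.sum_div]
          _ ≤ B ^ r / ((2:ℝ) ^ n) ^ P := by gcongr; exact hbound ε
      have e3 : (B ^ r / ((2:ℝ) ^ n) ^ P) ^ (1/P) = B ^ (2:ℝ) / 2 ^ n := by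
        rw [Real.div_rpow (Real.rpow_nonneg hB _) (by positivity),
          ← Real.rpow_mul hB, ← Real.rpow_mul (by positivity : (0:ℝ) ≤ (2:ℝ)^n)]
        rw [mul_one_div, mul_one_div, div_self (ne_of_gt hP0), Real.rpow_one]
        congr 1
        rw [hPdef]; field_simp
      calc (∑ v ∈ V, G ε v ^ P) ^ (1/P) ≤ (B ^ r / ((2:ℝ) ^ n) ^ P) ^ (1/P) := by
            apply Real.rpow_le_rpow (Finset.sum_nonneg fun v _ =>
              Real.rpow_nonneg (hG0 ε v) _) e2 (by positivity)
        _ = B ^ (2:ℝ) / 2 ^ n := e3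
    have sumε : ∑ _ε : Fin n → Bool, (B ^ (2:ℝ) / 2 ^ n : ℝ) = B ^ (2:ℝ) := by
      rw [Finset.sum_const, nsmul_eq_mul]
      have hcard : (Finset.univ : Finset (Fin n → Bool)).card = 2 ^ n := by
        simp [Fintype.card_fun]
      rw [hcard]
      push_cast
      field_simp
    have keyB : (∑ v ∈ V, Avg v ^ P) ^ (1/P) ≤ B ^ (2:ℝ) := by
      calc (∑ v ∈ V, Avg v ^ P) ^ (1/P)
          = (∑ v ∈ V, (∑ ε : Fin n → Bool, G ε v) ^ P) ^ (1/P) := by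
            rw [Finset.sum_congr rfl fun v _ => by rw [hAvgG v]]
        _ ≤ ∑ ε : Fin n → Bool, (∑ v ∈ V, G ε v ^ P) ^ (1/P) := key
        _ ≤ ∑ _ε : Fin n → Bool, (B ^ (2:ℝ) / 2 ^ n : ℝ) :=
            Finset.sum_le_sum fun ε _ => perε ε
        _ = B ^ (2:ℝ) := sumε
    have hsum0 : 0 ≤ ∑ v ∈ V, Avg v ^ P :=
      Finset.sum_nonneg fun v _ => Real.rpow_nonneg (hAvg0 v) _
    calc ∑ v ∈ V, Avg v ^ P = ((∑ v ∈ V, Avg v ^ P) ^ (1/P)) ^ P := by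
          rw [← Real.rpow_mul hsum0, one_div, inv_mul_cancel₀ (ne_of_gt hP0), Real.rpow_one]
      _ ≤ (B ^ (2:ℝ)) ^ P := Real.rpow_le_rpow (Real.rpow_nonneg hsum0 _) keyB hP0.le
      _ = B ^ r := by
          rw [← Real.rpow_mul hB]
          congr 1
          rw [hPdef]; ring
  -- combine
  calc ∑ k : Fin n, ∑ v ∈ V, ‖u k v‖ ^ r = ∑ v ∈ V, ∑ k : Fin n, ‖u k v‖ ^ r :=
        Finset.sum_comm
    _ ≤ ∑ v ∈ V, Cq ^ r * Avg v ^ P := Finset.sum_le_sum stepA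
    _ = Cq ^ r * ∑ v ∈ V, Avg v ^ P := by rw [Finset.mul_sum]
    _ ≤ Cq ^ r * B ^ r := by
        apply mul_le_mul_of_nonneg_left stepB (Real.rpow_nonneg hCq.le _)
    _ = (Cq * B) ^ r := (Real.mul_rpow hCq.le hB).symm

lemma aux_rpow_le_one {a p : ℝ} (ha : 0 ≤ a) (hp : 0 < p) (h : a ^ p ≤ 1) : a ≤ 1 := by
  by_contra hc
  push_neg at hc
  have : (1:ℝ) < a ^ p := by
    have := Real.rpow_lt_rpow (by norm_num : (0:ℝ) ≤ 1) hc hp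
    simpa using this
  linarith

lemma WeakNormLEOne.norm_le_one {X : Type*} [NormedAddCommGroup X] [NormedSpace ℝ X]
    {p : ℝ} (hp : 1 ≤ p) {x : ℕ → X} (hx : WeakNormLEOne p x) (i : ℕ) : ‖x i‖ ≤ 1 := by
  obtain ⟨g, hg1, hgx⟩ := exists_dual_vector'' ℝ (x i)
  have h := hx g hg1 {i}
  simp only [Finset.sum_singleton] at h
  have : |g (x i)| = ‖x i‖ := by rw [hgx]; exact_mod_cast abs_of_nonneg (norm_nonneg (x i))
  rw [this] at h
  exact aux_rpow_le_one (norm_nonneg _) (by linarith) h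

lemma aux_norm_comb_le_one {X : Type*} [NormedAddCommGroup X] [NormedSpace ℝ X]
    {z : ℕ → X} (W : Finset ℕ) (c : ℕ → ℝ) (hc : ∀ i, 0 ≤ c i)
    (hadm : ∀ φ : X →L[ℝ] ℝ, ‖φ‖ ≤ 1 → ∑ i ∈ W, c i * |φ (z i)| ≤ 1)
    (ε : ℕ → ℝ) (hε : ∀ i, |ε i| ≤ 1) :
    ‖∑ i ∈ W, (ε i * c i) • z i‖ ≤ 1 := by
  obtain ⟨g, hg1, hgx⟩ := exists_dual_vector'' ℝ (∑ i ∈ W, (ε i * c i) • z i)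
  calc ‖∑ i ∈ W, (ε i * c i) • z i‖ = g (∑ i ∈ W, (ε i * c i) • z i) := by exact_mod_cast hgx.symm
    _ = ∑ i ∈ W, (ε i * c i) * g (z i) := by
        rw [map_sum]
        exact Finset.sum_congr rfl fun i _ => by rw [map_smul]; rfl
    _ ≤ ∑ i ∈ W, c i * |g (z i)| := by
        apply Finset.sum_le_sum
        intro i _
        calc (ε i * c i) * g (z i) ≤ |(ε i * c i) * g (z i)| := le_abs_self _
          _ = |ε i| * (c i * |g (z i)|) := by
              rw [abs_mul, abs_mul, abs_of_nonneg (hc i)]; ring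
          _ ≤ 1 * (c i * |g (z i)|) := by
              apply mul_le_mul_of_nonneg_right (hε i)
              exact mul_nonneg (hc i) (abs_nonneg _)
          _ = c i * |g (z i)| := one_mul _
    _ ≤ 1 := hadm g hg1

lemma step_lemma {m : ℕ} {X : Fin m → Type*} [∀ j, NormedAddCommGroup (X j)]
    [∀ j, NormedSpace ℝ (X j)] {Y : Type*} [NormedAddCommGroup Y] [NormedSpace ℝ Y]
    {q Cq : ℝ} (hq : 2 ≤ q) (hCq : 0 < Cq)
    (hYc : ∀ n : ℕ, ∀ y : Fin n → Y,
      (∑ k, ‖y k‖ ^ q) ^ (1 / q) ≤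
        Cq * ((∑ ε : Fin n → Bool, ‖∑ k, (if ε k then (1 : ℝ) else -1) • y k‖ ^ 2) / 2 ^ n)
          ^ ((1 : ℝ) / 2))
    (qq : Fin m → ℝ) (hqq : ∀ k, 1 ≤ qq k)
    (C' : Finset (Fin m)) (j₀ : Fin m) (hj₀ : j₀ ∉ C')
    {r' r'' : ℝ} (hqr' : q ≤ r') (hr''1 : 1 ≤ r'')
    (hrel : 1 / r'' = 1 / r' - (1 - 1 / qq j₀))
    (T : ContinuousMultilinearMap ℝ X Y) {B : ℝ} (hB : 0 ≤ B)
    (hT : ∀ z : ∀ j, X j, (∀ j ∉ C', ‖z j‖ ≤ 1) → CoordSummingWith T C' r' qq z B)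
    (z : ∀ j, X j) (hz : ∀ j ∉ insert j₀ C', ‖z j‖ ≤ 1) :
    CoordSummingWith T (insert j₀ C') r'' qq z (Cq * B) := by
  intro x hx F
  have hr'1 : (1:ℝ) ≤ r' := by linarith
  have hr'0 : (0:ℝ) < r' := by linarith
  have hr''0 : (0:ℝ) < r'' := by linarith
  have hp1 : 1 ≤ qq j₀ := hqq j₀
  have hp0 : (0:ℝ) < qq j₀ := by linarith
  have ha0 : 0 ≤ 1 - 1 / qq j₀ := by
    have : 1 / qq j₀ ≤ 1 := by
      rw [div_le_one hp0]; exact hp1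
    linarith
  have hr'r'' : r' ≤ r'' := by
    have h1 : 1 / r'' ≤ 1 / r' := by rw [hrel]; linarith
    have h2 : (0:ℝ) < 1 / r'' := by positivity
    exact le_of_one_div_le_one_div hr''0 h1
  have hee : (1:ℝ) ≤ r'' / r' := (one_le_div hr'0).2 hr'r''
  -- the base tuple
  set A : ({k : Fin m // k ∈ C'} → ℕ) → ∀ j, X j :=
    fun v j => if h : j ∈ C' then x j (v ⟨j, h⟩) else z j with hA
  set res : ({k : Fin m // k ∈ insert j₀ C'} → ℕ) → ({k : Fin m // k ∈ C'} → ℕ) :=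
    fun i k => i ⟨k.1, Finset.mem_insert_of_mem k.2⟩ with hres
  set top : ({k : Fin m // k ∈ insert j₀ C'} → ℕ) → ℕ :=
    fun i => i ⟨j₀, Finset.mem_insert_self _ _⟩ with htop
  have htuple : ∀ i : {k : Fin m // k ∈ insert j₀ C'} → ℕ,
      (fun j => if h : j ∈ insert j₀ C' then x j (i ⟨j, h⟩) else z j)
        = Function.update (A (res i)) j₀ (x j₀ (top i)) := by
    intro i; funext j
    by_cases hjj : j = j₀
    · subst hjj
      rw [Function.update_self]
      try rw [dif_pos (Finset.mem_insert_self _ _)]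
      try rfl
    · rw [Function.update_of_ne hjj]
      by_cases hjC : j ∈ C'
      · rw [dif_pos (Finset.mem_insert_of_mem hjC), hA]
        try simp only [dif_pos hjC]
        try rfl
      · have : j ∉ insert j₀ C' := by
          simp [Finset.mem_insert, hjj, hjC]
        rw [dif_neg this, hA]
        try simp only [dif_neg hjC]
        try rfl
  set W : Finset ℕ := F.image top with hW
  set V : Finset ({k : Fin m // k ∈ C'} → ℕ) := F.image res with hV
  set L : ℕ → ℝ := fun w => ∑ v ∈ V, ‖T (Function.update (A v) j₀ (x j₀ w))‖ ^ r' with hLdef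
  have hL0 : ∀ w, 0 ≤ L w := fun w =>
    Finset.sum_nonneg fun v _ => Real.rpow_nonneg (norm_nonneg _) _
  -- uniform bound for substituted vectors
  have hLB : ∀ ξ : X j₀, ‖ξ‖ ≤ 1 →
      ∑ v ∈ V, ‖T (Function.update (A v) j₀ ξ)‖ ^ r' ≤ B ^ r' := by
    intro ξ hξ
    have hz' : ∀ j ∉ C', ‖Function.update z j₀ ξ j‖ ≤ 1 := by
      intro j hj
      by_cases hjj : j = j₀
      · subst hjj; rw [Function.update_self]; exact hξ
      · rw [Function.update_of_ne hjj]
        exact hz j (by simp [Finset.mem_insert, hjj, hj])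
    have h := hT _ hz' x (fun j hj => hx j (Finset.mem_insert_of_mem hj)) V
    have htuple2 : ∀ v : {k : Fin m // k ∈ C'} → ℕ,
        (fun j => if h : j ∈ C' then x j (v ⟨j, h⟩) else Function.update z j₀ ξ j)
          = Function.update (A v) j₀ ξ := by
      intro v; funext j
      by_cases hjj : j = j₀
      · subst hjj
        rw [dif_neg hj₀]
        try rw [Function.update_self]
        try rw [Function.update_self]
        try rfl
      · rw [Function.update_of_ne hjj, Function.update_of_ne hjj]
        try rw [hA]
        try (by_cases hjC : j ∈ C' <;> simp only [dif_pos, dif_neg, hjC] <;> try rfl)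
    calc ∑ v ∈ V, ‖T (Function.update (A v) j₀ ξ)‖ ^ r'
        = ∑ v ∈ V, ‖T (fun j => if h : j ∈ C' then x j (v ⟨j, h⟩)
            else Function.update z j₀ ξ j)‖ ^ r' := by
          exact Finset.sum_congr rfl fun v _ => by rw [htuple2 v]
      _ ≤ B ^ r' := h
  -- the key claim from cotype
  have claim : ∀ c : ℕ → ℝ, (∀ i, 0 ≤ c i) →
      (∀ φ : X j₀ →L[ℝ] ℝ, ‖φ‖ ≤ 1 → ∑ w ∈ W, c w * |φ (x j₀ w)| ≤ 1) →
      ∑ w ∈ W, c w ^ r' * L w ≤ (Cq * B) ^ r' := by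
    intro c hc hadm
    set n : ℕ := W.card with hn
    set e : {x // x ∈ W} ≃ Fin n := W.equivFin with hedef
    set σ : Fin n → ℕ := fun k => ((e.symm k : {x // x ∈ W}) : ℕ) with hσ
    have hσW : ∀ k, σ k ∈ W := fun k => (e.symm k).2
    have hσsumR : ∀ g : ℕ → ℝ, ∑ k : Fin n, g (σ k) = ∑ w ∈ W, g w := by
      intro g
      rw [← Finset.sum_coe_sort W g]
      exact Equiv.sum_comp e.symm (fun i : {x // x ∈ W} => g ↑i)
    have hσsumX : ∀ g : ℕ → X j₀, ∑ k : Fin n, g (σ k) = ∑ w ∈ W, g w := by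
      intro g
      rw [← Finset.sum_coe_sort W g]
      exact Equiv.sum_comp e.symm (fun i : {x // x ∈ W} => g ↑i)
    set u : Fin n → ({k : Fin m // k ∈ C'} → ℕ) → Y :=
      fun k v => c (σ k) • T (Function.update (A v) j₀ (x j₀ (σ k))) with hu
    have hbound : ∀ ε : Fin n → Bool,
        ∑ v ∈ V, ‖∑ k, (if ε k then (1:ℝ) else -1) • u k v‖ ^ r' ≤ B ^ r' := by
      intro ε
      set E : ℕ → ℝ :=
        fun i => if h : i ∈ W then (if ε (e ⟨i, h⟩) then (1:ℝ) else -1) else 1 with hE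
      have hEσ : ∀ k, E (σ k) = (if ε k then (1:ℝ) else -1) := by
        intro k
        rw [hE]
        simp only [dif_pos (hσW k)]
        congr 2
        have h1 : (⟨σ k, hσW k⟩ : {x // x ∈ W}) = e.symm k := Subtype.ext rfl
        rw [h1, Equiv.apply_symm_apply]
      have hE1 : ∀ i, |E i| ≤ 1 := by
        intro i
        simp only [hE]
        split_ifs <;> norm_num
      set ξ : X j₀ := ∑ w ∈ W, (E w * c w) • x j₀ w with hξ
      have hξ1 : ‖ξ‖ ≤ 1 := aux_norm_comb_le_one W c hc hadm E hE1
      have hexpand : ∀ v, (∑ k, (if ε k then (1:ℝ) else -1) • u k v)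
          = T (Function.update (A v) j₀ ξ) := by
        intro v
        have hsum : ξ = ∑ k : Fin n,
            ((if ε k then (1:ℝ) else -1) * c (σ k)) • x j₀ (σ k) := by
          rw [hξ, ← hσsumX (fun w => (E w * c w) • x j₀ w)]
          exact Finset.sum_congr rfl fun k _ => by rw [hEσ k]
        rw [hsum]
        have hmus := T.toMultilinearMap.map_update_sum (Finset.univ : Finset (Fin n)) j₀
          (fun k => ((if ε k then (1:ℝ) else -1) * c (σ k)) • x j₀ (σ k)) (A v)
        rw [ContinuousMultilinearMap.coe_coe] at hmus
        rw [hmus]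
        refine Finset.sum_congr rfl fun k _ => ?_
        have hms := T.toMultilinearMap.map_update_smul (A v) j₀
          ((if ε k then (1:ℝ) else -1) * c (σ k)) (x j₀ (σ k))
        rw [ContinuousMultilinearMap.coe_coe] at hms
        rw [hms]
        simp only [hu]
        rw [smul_smul]
      calc ∑ v ∈ V, ‖∑ k, (if ε k then (1:ℝ) else -1) • u k v‖ ^ r'
          = ∑ v ∈ V, ‖T (Function.update (A v) j₀ ξ)‖ ^ r' :=
            Finset.sum_congr rfl fun v _ => by rw [hexpand v]
        _ ≤ B ^ r' := hLB ξ hξ1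
    have hcot := aux_cotype hq hqr' hCq hYc V u hB hbound
    have hfinal : ∑ k : Fin n, ∑ v ∈ V, ‖u k v‖ ^ r' = ∑ w ∈ W, c w ^ r' * L w := by
      have hterm : ∀ k : Fin n, ∑ v ∈ V, ‖u k v‖ ^ r' = c (σ k) ^ r' * L (σ k) := by
        intro k
        rw [hLdef]
        rw [Finset.mul_sum]
        refine Finset.sum_congr rfl fun v _ => ?_
        rw [hu]
        rw [norm_smul, Real.norm_eq_abs,
          Real.mul_rpow (abs_nonneg _) (norm_nonneg _), abs_of_nonneg (hc _)]
      rw [Finset.sum_congr rfl fun k _ => hterm k]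
      exact hσsumR (fun w => c w ^ r' * L w)
    rw [← hfinal]
    exact hcot
  -- reduction of the goal to the W-sum
  have reduction : ∑ i ∈ F, ‖T (fun j => if h : j ∈ insert j₀ C' then x j (i ⟨j, h⟩)
      else z j)‖ ^ r'' ≤ ∑ w ∈ W, L w ^ (r'' / r') := by
    set t2 : ℕ × ({k : Fin m // k ∈ C'} → ℕ) → ℝ :=
      fun pr => ‖T (Function.update (A pr.2) j₀ (x j₀ pr.1))‖ ^ r'' with ht2
    have ht20 : ∀ pr, 0 ≤ t2 pr := fun pr => Real.rpow_nonneg (norm_nonneg _) _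
    have e0 : ∑ i ∈ F, ‖T (fun j => if h : j ∈ insert j₀ C' then x j (i ⟨j, h⟩)
        else z j)‖ ^ r'' = ∑ i ∈ F, t2 (top i, res i) :=
      Finset.sum_congr rfl fun i _ => by rw [htuple i]
    have einj : ∀ i ∈ F, ∀ i' ∈ F,
        (fun i => (top i, res i)) i = (fun i => (top i, res i)) i' → i = i' := by
      intro i _ i' _ h
      simp only [Prod.mk.injEq] at h
      funext k
      obtain ⟨k, hk⟩ := k
      rcases Finset.mem_insert.1 hk with h0 | h1
      · have hks : (⟨k, hk⟩ : {k : Fin m // k ∈ insert j₀ C'})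
            = ⟨j₀, Finset.mem_insert_self _ _⟩ := Subtype.ext h0
        rw [hks]
        exact h.1
      · exact congrFun h.2 ⟨k, h1⟩
    have e1 : ∑ i ∈ F, t2 (top i, res i)
        = ∑ pr ∈ F.image (fun i => (top i, res i)), t2 pr :=
      (Finset.sum_image einj).symm
    have hsub : F.image (fun i => (top i, res i)) ⊆ W ×ˢ V := by
      intro pr hpr
      obtain ⟨i, hi, rfl⟩ := Finset.mem_image.1 hpr
      exact Finset.mem_product.2 ⟨Finset.mem_image_of_mem _ hi, Finset.mem_image_of_mem _ hi⟩
    have e2 : ∑ pr ∈ F.image (fun i => (top i, res i)), t2 pr ≤ ∑ pr ∈ W ×ˢ V, t2 pr :=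
      Finset.sum_le_sum_of_subset_of_nonneg hsub fun pr _ _ => ht20 pr
    have e3 : ∑ pr ∈ W ×ˢ V, t2 pr = ∑ w ∈ W, ∑ v ∈ V, t2 (w, v) := Finset.sum_product _ _ _
    have e4 : ∀ w ∈ W, ∑ v ∈ V, t2 (w, v) ≤ L w ^ (r'' / r') := by
      intro w _
      have hterm : ∀ v, t2 (w, v)
          = (‖T (Function.update (A v) j₀ (x j₀ w))‖ ^ r') ^ (r'' / r') := by
        intro v
        rw [ht2, ← Real.rpow_mul (norm_nonneg _)]
        congr 1
        field_simp
      calc ∑ v ∈ V, t2 (w, v)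
          = ∑ v ∈ V, (‖T (Function.update (A v) j₀ (x j₀ w))‖ ^ r') ^ (r'' / r') :=
            Finset.sum_congr rfl fun v _ => hterm v
        _ ≤ (∑ v ∈ V, ‖T (Function.update (A v) j₀ (x j₀ w))‖ ^ r') ^ (r'' / r') :=
            aux_sum_rpow_le _ _ (fun v _ => Real.rpow_nonneg (norm_nonneg _) _) hee
        _ = L w ^ (r'' / r') := rfl
    calc ∑ i ∈ F, ‖T (fun j => if h : j ∈ insert j₀ C' then x j (i ⟨j, h⟩) else z j)‖ ^ r''
        = ∑ i ∈ F, t2 (top i, res i) := e0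
      _ = ∑ pr ∈ F.image (fun i => (top i, res i)), t2 pr := e1
      _ ≤ ∑ pr ∈ W ×ˢ V, t2 pr := e2
      _ = ∑ w ∈ W, ∑ v ∈ V, t2 (w, v) := e3
      _ ≤ ∑ w ∈ W, L w ^ (r'' / r') := Finset.sum_le_sum e4
  -- final duality argument
  have final : ∑ w ∈ W, L w ^ (r'' / r') ≤ ((Cq * B) ^ r'' : ℝ) := by
    rcases eq_or_lt_of_le hp1 with hpeq | hplt
    · -- qq j₀ = 1
      have hr'eq : r' = r'' := by
        have h1 : 1 / r'' = 1 / r' := by rw [hrel, ← hpeq]; norm_num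
        rw [div_eq_div_iff (ne_of_gt hr''0) (ne_of_gt hr'0)] at h1
        linarith
      have hdiv1 : r'' / r' = 1 := by rw [hr'eq]; exact div_self (ne_of_gt hr''0)
      have hadm1 : ∀ φ : X j₀ →L[ℝ] ℝ, ‖φ‖ ≤ 1 →
          ∑ w ∈ W, (1 : ℝ) * |φ (x j₀ w)| ≤ 1 := by
        intro φ hφ
        have h := hx j₀ (Finset.mem_insert_self _ _) φ hφ W
        rw [← hpeq] at h
        simpa [Real.rpow_one] using h
      have hkey := claim (fun _ => (1:ℝ)) (fun _ => zero_le_one) hadm1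
      calc ∑ w ∈ W, L w ^ (r'' / r') = ∑ w ∈ W, (1:ℝ) ^ r' * L w := by
            refine Finset.sum_congr rfl fun w _ => ?_
            rw [hdiv1, Real.rpow_one, Real.one_rpow, one_mul]
        _ ≤ (Cq * B) ^ r' := hkey
        _ = (Cq * B) ^ r'' := by rw [hr'eq]
    · -- 1 < qq j₀
      set p : ℝ := qq j₀ with hpdef
      set a : ℝ := 1 - 1 / p with hadef
      have hinvp0 : 0 < 1 / p := by positivity
      have hinvp1 : 1 / p < 1 := by rw [div_lt_one hp0]; exact hplt
      have ha0' : 0 < a := by rw [hadef]; linarith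
      have ha1 : a < 1 := by rw [hadef]; linarith
      have haeq : a = 1 / r' - 1 / r'' := by rw [hadef]; rw [hrel]; ring
      set S : ℝ := ∑ w ∈ W, L w ^ (r'' / r') with hSdef
      have hS0 : 0 ≤ S :=
        Finset.sum_nonneg fun w _ => Real.rpow_nonneg (hL0 w) _
      rcases eq_or_lt_of_le hS0 with hSz | hSpos
      · rw [← hSz]
        exact Real.rpow_nonneg (mul_nonneg hCq.le hB) _
      set μ : ℕ → ℝ := fun w => L w ^ (1 / r') with hμdef
      have hμ0 : ∀ w, 0 ≤ μ w := fun w => Real.rpow_nonneg (hL0 w) _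
      have hLμ : ∀ w, L w = μ w ^ r' := by
        intro w
        rw [hμdef, ← Real.rpow_mul (hL0 w), one_div, inv_mul_cancel₀ (ne_of_gt hr'0),
          Real.rpow_one]
      have hSμ : S = ∑ w ∈ W, μ w ^ r'' := by
        rw [hSdef]
        refine Finset.sum_congr rfl fun w _ => ?_
        rw [hμdef, ← Real.rpow_mul (hL0 w)]
        congr 1
        field_simp
      set c : ℕ → ℝ := fun w => μ w ^ (r'' * a) / S ^ a with hcdef
      have hc0 : ∀ w, 0 ≤ c w := fun w =>
        div_nonneg (Real.rpow_nonneg (hμ0 w) _) (Real.rpow_nonneg hS0 _)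
      have hcsum : ∑ w ∈ W, c w ^ (1 / a) = 1 := by
        have hterm : ∀ w, c w ^ (1 / a) = μ w ^ r'' / S := by
          intro w
          rw [hcdef]
          rw [Real.div_rpow (Real.rpow_nonneg (hμ0 w) _) (Real.rpow_nonneg hS0 _),
            ← Real.rpow_mul (hμ0 w), ← Real.rpow_mul hS0]
          rw [show r'' * a * (1 / a) = r'' by field_simp,
            show a * (1 / a) = 1 by field_simp, Real.rpow_one]
        rw [Finset.sum_congr rfl fun w _ => hterm w, ← Finset.sum_div, ← hSμ,
          div_self (ne_of_gt hSpos)]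
      have hadm : ∀ φ : X j₀ →L[ℝ] ℝ, ‖φ‖ ≤ 1 →
          ∑ w ∈ W, c w * |φ (x j₀ w)| ≤ 1 := by
        intro φ hφ
        have hconj : Real.HolderConjugate (1 / a) p := by
          rw [Real.holderConjugate_iff]
          constructor
          · exact one_lt_one_div ha0' ha1
          · rw [one_div, inv_inv, hadef, one_div]
            ring
        have hHolder := Real.inner_le_Lp_mul_Lq W c (fun w => |φ (x j₀ w)|) hconj
        have hfac1 : (∑ w ∈ W, |c w| ^ (1 / a)) ^ (1 / (1 / a)) = 1 := by
          have : ∀ w ∈ W, |c w| ^ (1/a) = c w ^ (1/a) := fun w _ => by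
            rw [abs_of_nonneg (hc0 w)]
          rw [Finset.sum_congr rfl this, hcsum, Real.one_rpow]
        have hfac2 : (∑ w ∈ W, |(|φ (x j₀ w)|)| ^ p) ^ (1 / p) ≤ 1 := by
          have h := hx j₀ (Finset.mem_insert_self _ _) φ hφ W
          have heq : ∀ w ∈ W, |(|φ (x j₀ w)|)| ^ p = |φ (x j₀ w)| ^ p := fun w _ => by
            rw [abs_abs]
          rw [Finset.sum_congr rfl heq]
          exact Real.rpow_le_one (Finset.sum_nonneg fun w _ =>
            Real.rpow_nonneg (abs_nonneg _) _) h (by positivity)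
        calc ∑ w ∈ W, c w * |φ (x j₀ w)|
            ≤ (∑ w ∈ W, |c w| ^ (1 / a)) ^ (1 / (1 / a))
              * (∑ w ∈ W, |(|φ (x j₀ w)|)| ^ p) ^ (1 / p) := hHolder
          _ ≤ 1 * 1 := by
              rw [hfac1]
              simp only [one_mul]
              exact hfac2
          _ = 1 := one_mul 1
      have hkey := claim c hc0 hadm
      have hexp1 : r'' * a * r' + r' = r'' := by
        rw [haeq]
        field_simp
        ring
      have hexp2 : 1 - a * r' = r' / r'' := by
        rw [haeq]
        field_simp
        ring
      have hLHS : ∑ w ∈ W, c w ^ r' * L w = S ^ (r' / r'') := by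
        have hterm : ∀ w, c w ^ r' * L w = μ w ^ r'' / S ^ (a * r') := by
          intro w
          rw [hcdef, Real.div_rpow (Real.rpow_nonneg (hμ0 w) _) (Real.rpow_nonneg hS0 _),
            ← Real.rpow_mul (hμ0 w), ← Real.rpow_mul hS0, hLμ w, div_mul_eq_mul_div,
            ← Real.rpow_add' (hμ0 w) (by rw [hexp1]; linarith)]
          rw [show r'' * a * r' + r' = r'' from hexp1, show a * r' = r' * a by ring]
        rw [Finset.sum_congr rfl fun w _ => hterm w, ← Finset.sum_div, ← hSμ]
        rw [← hexp2, Real.rpow_sub hSpos, Real.rpow_one, show a * r' = r' * a by ring]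
      rw [hLHS] at hkey
      calc S = (S ^ (r' / r'')) ^ (r'' / r') := by
            rw [← Real.rpow_mul hS0]
            rw [show r' / r'' * (r'' / r') = 1 by field_simp, Real.rpow_one]
        _ ≤ ((Cq * B) ^ r') ^ (r'' / r') :=
            Real.rpow_le_rpow (Real.rpow_nonneg hS0 _) hkey (by positivity)
        _ = (Cq * B) ^ r'' := by
            rw [← Real.rpow_mul (mul_nonneg hCq.le hB)]
            congr 1
            field_simp
  exact le_trans reduction final

end AuxLemmas

/-- Lemma 4.2: with `Y` of cotype `q`, `1/r = 1/s + Σ_{j∈C̄} 1/q_j*`, `r ≥ q` and `s ≥ q_k`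
for all `k`, there is κ > 0 (independent of `T`) with
`π^mult_{s,𝐪}(T) ≤ κ · sup { π^mult_{r,𝐭}(T^C(z)) : ‖z‖_{X^{C̄}} ≤ 1 }`, expressed via
admissible constants: any uniform admissible constant `B` for the maps `T^C(z)`,
`‖z‖_{X^{C̄}} ≤ 1`, makes `κ·B` admissible for `T`. -/
theorem stmt14 {m : ℕ} (hm : 1 ≤ m) {X : Fin m → Type*} [∀ j, NormedAddCommGroup (X j)]
    [∀ j, NormedSpace ℝ (X j)] [∀ j, CompleteSpace (X j)]
    {Y : Type*} [NormedAddCommGroup Y] [NormedSpace ℝ Y] [CompleteSpace Y]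
    {q : ℝ} (hq : 2 ≤ q) (hY : HasCotype Y q)
    (qq : Fin m → ℝ) (hqq : ∀ k, 1 ≤ qq k)
    (C : Finset (Fin m))
    (s r : ℝ) (hs1 : 1 ≤ s) (hr1 : 1 ≤ r)
    (hrs : 1 / r = 1 / s + ∑ j ∈ Finset.univ \ C, (1 - 1 / qq j))
    (hrq : q ≤ r) (hsq : ∀ k, qq k ≤ s) :
    ∃ κ > 0, ∀ T : ContinuousMultilinearMap ℝ X Y, ∀ B : ℝ, 0 ≤ B →
      (∀ z : ∀ j, X j, (∀ j ∉ C, ‖z j‖ ≤ 1) → CoordSummingWith T C r qq z B) →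
      MultSummingWith T s qq (κ * B) := by
  classical
  obtain ⟨Cq, hCq, hYc⟩ := hY
  refine ⟨Cq ^ (Finset.univ \ C).card, pow_pos hCq _, ?_⟩
  intro T B hB hTz
  have hs0 : (0:ℝ) < s := by linarith
  have hr0 : (0:ℝ) < r := by linarith
  have hterm0 : ∀ j : Fin m, 0 ≤ 1 - 1 / qq j := by
    intro j
    have hqj : (0:ℝ) < qq j := by linarith [hqq j]
    have : 1 / qq j ≤ 1 := by rw [div_le_one hqj]; exact hqq j
    linarith
  set ν : Finset (Fin m) → ℝ := fun D => 1 / r - ∑ j ∈ D, (1 - 1 / qq j) with hν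
  have hνs : ∀ D ⊆ Finset.univ \ C, 1 / s ≤ ν D := by
    intro D hD
    have hle : ∑ j ∈ D, (1 - 1 / qq j) ≤ ∑ j ∈ Finset.univ \ C, (1 - 1 / qq j) :=
      Finset.sum_le_sum_of_subset_of_nonneg hD fun j _ _ => hterm0 j
    simp only [hν]
    linarith [hrs]
  have hνr : ∀ D : Finset (Fin m), ν D ≤ 1 / r := by
    intro D
    have := Finset.sum_nonneg fun j (_ : j ∈ D) => hterm0 j
    simp only [hν]
    linarith
  have hν0 : ∀ D ⊆ Finset.univ \ C, 0 < ν D := fun D hD =>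
    lt_of_lt_of_le (by positivity) (hνs D hD)
  have hνinv_r : ∀ D ⊆ Finset.univ \ C, r ≤ (ν D)⁻¹ := by
    intro D hD
    rw [le_inv_comm₀ hr0 (hν0 D hD)]
    calc ν D ≤ 1 / r := hνr D
      _ = r⁻¹ := one_div r
  have hνinv_s : ∀ D ⊆ Finset.univ \ C, (ν D)⁻¹ ≤ s := by
    intro D hD
    rw [inv_le_comm₀ (hν0 D hD) hs0]
    calc s⁻¹ = 1 / s := (one_div s).symm
      _ ≤ ν D := hνs D hD
  have main : ∀ D : Finset (Fin m), D ⊆ Finset.univ \ C →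
      ∀ z : ∀ j, X j, (∀ j ∉ C ∪ D, ‖z j‖ ≤ 1) →
      CoordSummingWith T (C ∪ D) (ν D)⁻¹ qq z (Cq ^ D.card * B) := by
    intro D
    induction D using Finset.induction_on with
    | empty =>
      intro _ z hzb
      have h1 : (ν ∅)⁻¹ = r := by
        simp only [hν, Finset.sum_empty, sub_zero, one_div, inv_inv]
      have h2 : C ∪ (∅ : Finset (Fin m)) = C := Finset.union_empty C
      rw [h2] at hzb
      rw [h1, h2, Finset.card_empty, pow_zero, one_mul]
      exact hTz z hzb
    | @insert j D hjD ih =>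
      intro hins z hzb
      have hDsub : D ⊆ Finset.univ \ C :=
        subset_trans (Finset.subset_insert j D) hins
      have hjuniv : j ∈ Finset.univ \ C := hins (Finset.mem_insert_self j D)
      have hjC : j ∉ C ∪ D := by
        rw [Finset.mem_union]
        push_neg
        exact ⟨(Finset.mem_sdiff.1 hjuniv).2, hjD⟩
      have hrel : 1 / (ν (insert j D))⁻¹ = 1 / (ν D)⁻¹ - (1 - 1 / qq j) := by
        rw [one_div, inv_inv, one_div, inv_inv]
        simp only [hν, Finset.sum_insert hjD]
        ring
      have hq_le : q ≤ (ν D)⁻¹ := le_trans hrq (hνinv_r D hDsub)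
      have h1le : 1 ≤ (ν (insert j D))⁻¹ :=
        le_trans (le_trans hr1 (hνinv_r _ hins)) (le_refl _)
      have hB' : 0 ≤ Cq ^ D.card * B := mul_nonneg (pow_pos hCq _).le hB
      have hres := step_lemma hq hCq hYc qq hqq (C ∪ D) j hjC hq_le h1le hrel T hB'
        (fun z' hz' => ih hDsub z' hz') z
        (by
          intro j' hj'
          apply hzb
          rw [Finset.union_insert]
          exact hj')
      have hset : insert j (C ∪ D) = C ∪ insert j D := (Finset.union_insert ..).symm
      have hconst : Cq * (Cq ^ D.card * B) = Cq ^ (insert j D).card * B := by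
        rw [Finset.card_insert_of_notMem hjD, pow_succ]
        ring
      rw [hset, hconst] at hres
      exact hres
  have hfin := main (Finset.univ \ C) (subset_refl _) (fun j => 0) (fun j _ => by simp)
  have hCuniv : C ∪ (Finset.univ \ C) = Finset.univ :=
    Finset.union_sdiff_of_subset (Finset.subset_univ C)
  have hνuniv : (ν (Finset.univ \ C))⁻¹ = s := by
    have : ν (Finset.univ \ C) = 1 / s := by
      simp only [hν]
      rw [hrs]
      ring
    rw [this, one_div, inv_inv]
  rw [hCuniv, hνuniv] at hfin
  intro x hx F
  set E : (Fin m → ℕ) → ({j : Fin m // j ∈ (Finset.univ : Finset (Fin m))} → ℕ) :=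
    fun f k => f k.1 with hEdef
  have hEinj : ∀ f ∈ F, ∀ f' ∈ F, E f = E f' → f = f' := by
    intro f _ f' _ h
    funext j
    exact congrFun h ⟨j, Finset.mem_univ j⟩
  have hsum := Finset.sum_image (s := F) (g := E)
    (f := fun i => ‖T (fun j => if h : j ∈ (Finset.univ : Finset (Fin m))
      then x j (i ⟨j, h⟩) else (0 : X j))‖ ^ s) hEinj
  have hterm : ∀ f : Fin m → ℕ,
      ‖T (fun j => if h : j ∈ (Finset.univ : Finset (Fin m))
        then x j ((E f) ⟨j, h⟩) else (0 : X j))‖ ^ s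
      = ‖T (fun j => x j (f j))‖ ^ s := by
    intro f
    have harg : (fun j => if h : j ∈ (Finset.univ : Finset (Fin m))
        then x j ((E f) ⟨j, h⟩) else (0 : X j)) = fun j => x j (f j) := by
      funext j
      rw [dif_pos (Finset.mem_univ j)]
    rw [harg]
  calc ∑ i ∈ F, ‖T (fun j => x j (i j))‖ ^ s
      = ∑ i ∈ F.image E, ‖T (fun j => if h : j ∈ (Finset.univ : Finset (Fin m))
          then x j (i ⟨j, h⟩) else (0 : X j))‖ ^ s := by
        rw [hsum]
        exact Finset.sum_congr rfl fun f _ => (hterm f).symm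
    _ ≤ (Cq ^ (Finset.univ \ C).card * B) ^ s :=
        hfin x (fun j _ => hx j) (F.image E)
end
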